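/- arXiv:1309.1930 — 9 statements merged into one kernel-verified Lean document; each statement's English description precedes it below -/
import Mathlib

section
/- Let R : [0,∞) → ℝ be continuous and let ρ : [0,1] → (0,∞) be continuous and continuously differentiable on (0,1], satisfying ρ'(r) + R(ρ(r)) · ζ(r)/r² = 0 for all r ∈ (0,1], where ζ(r) = ∫₀^r z² ρ(z) dz. Define x(s) = e^{−s} ζ(e^s) and y(s) = e^{2s} ρ(e^s) for s ≤ 0. Then (x, y) is differentiable on (−∞,0] and satisfies x'(s) = y(s) − x(s) and y'(s) = 2 y(s) − e^{2s} R(e^{−2s} y(s)) x(s) for all s ∈ (−∞,0]; moreover 4π x(0) = 4π ∫₀¹ z² ρ(z) dz (the total mass of ρ over the unit ball of ℝ³) and lim_{s→−∞} e^{−2s} y(s) = ρ(0). -/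
open Real Filter Set

private lemma zeta_deriv (ρ : ℝ → ℝ) (hρc : ContinuousOn ρ (Set.Icc 0 1)) :
    ∀ r ∈ Set.Ioc (0:ℝ) 1, HasDerivWithinAt (fun u => ∫ z in (0:ℝ)..u, z ^ 2 * ρ z)
      (r ^ 2 * ρ r) (Set.Icc 0 1) r := by
  set f : ℝ → ℝ := fun z => z ^ 2 * ρ z with hf
  have fcont : ContinuousOn f (Set.Icc 0 1) :=
    (continuous_pow 2).continuousOn.mul hρc
  have fmeas : MeasureTheory.AEStronglyMeasurable f
      (MeasureTheory.volume.restrict (Set.Icc 0 1)) :=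
    fcont.aestronglyMeasurable measurableSet_Icc
  intro r hr
  have hint : IntervalIntegrable f MeasureTheory.volume 0 r := by
    apply (fcont.mono _).intervalIntegrable
    rw [Set.uIcc_of_le hr.1.le]
    exact Set.Icc_subset_Icc le_rfl hr.2
  rcases eq_or_lt_of_le hr.2 with h1 | h1
  · subst h1
    have heq : nhdsWithin (1:ℝ) (Set.Icc (0:ℝ) 1) = nhdsWithin 1 (Set.Iic 1) :=
      nhdsWithin_Icc_eq_nhdsLE one_pos
    have hmeas : StronglyMeasurableAtFilter f (nhdsWithin 1 (Set.Iic (1:ℝ))) :=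
      ⟨Set.Icc 0 1, by rw [← heq]; exact self_mem_nhdsWithin, fmeas⟩
    have hcw : ContinuousWithinAt f (Set.Iic 1) 1 := by
      have := fcont 1 (by norm_num)
      rwa [ContinuousWithinAt, heq] at this
    exact (intervalIntegral.integral_hasDerivWithinAt_right hint hmeas hcw).mono
      Set.Icc_subset_Iic_self
  · have hnb : Set.Icc (0:ℝ) 1 ∈ nhds r := Icc_mem_nhds hr.1 h1
    have hmeas : StronglyMeasurableAtFilter f (nhds r) := ⟨Set.Icc 0 1, hnb, fmeas⟩
    have hca : ContinuousAt f r := (fcont r ⟨hr.1.le, hr.2⟩).continuousAt hnb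
    exact (intervalIntegral.integral_hasDerivAt_right hint hmeas hca).hasDerivWithinAt

/-- the logarithmic change of variables `x(s) = e^{-s} ζ(e^s)`,
`y(s) = e^{2s} ρ(e^s)`, with `ζ(r) = ∫₀^r z² ρ(z) dz`, turns the equation
`ρ' + R(ρ) ζ(r)/r² = 0` on `(0,1]` into the non-autonomous system
`x' = y − x`, `y' = 2y − e^{2s} R(e^{−2s} y) x` on `(−∞,0]`; moreover
`4π x(0)` is the total mass and `e^{−2s} y(s) → ρ(0)` as `s → −∞`. -/
theorem change_of_variables_dynamical_system (R ρ x y : ℝ → ℝ)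
    (hR : ContinuousOn R (Set.Ici 0))
    (hρc : ContinuousOn ρ (Set.Icc 0 1))
    (hρpos : ∀ r ∈ Set.Icc (0 : ℝ) 1, 0 < ρ r)
    (hρC1 : ContDiffOn ℝ 1 ρ (Set.Ioc 0 1))
    (hODE : ∀ r ∈ Set.Ioc (0 : ℝ) 1,
      HasDerivWithinAt ρ
        (-(R (ρ r) * (∫ z in (0 : ℝ)..r, z ^ 2 * ρ z) / r ^ 2)) (Set.Ioc 0 1) r)
    (hx : ∀ s : ℝ, x s = Real.exp (-s) * ∫ z in (0 : ℝ)..Real.exp s, z ^ 2 * ρ z)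
    (hy : ∀ s : ℝ, y s = Real.exp (2 * s) * ρ (Real.exp s)) :
    (∀ s ∈ Set.Iic (0 : ℝ), HasDerivWithinAt x (y s - x s) (Set.Iic 0) s) ∧
    (∀ s ∈ Set.Iic (0 : ℝ), HasDerivWithinAt y
      (2 * y s - Real.exp (2 * s) * R (Real.exp (-2 * s) * y s) * x s) (Set.Iic 0) s) ∧
    (4 * Real.pi * x 0 = 4 * Real.pi * ∫ z in (0 : ℝ)..1, z ^ 2 * ρ z) ∧
    Filter.Tendsto (fun s => Real.exp (-2 * s) * y s) Filter.atBot (nhds (ρ 0)) := by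
  set g : ℝ → ℝ := fun u => ∫ z in (0:ℝ)..u, z ^ 2 * ρ z with hg
  have hmapIcc : Set.MapsTo Real.exp (Set.Iic (0:ℝ)) (Set.Icc 0 1) := fun s hs =>
    ⟨(Real.exp_pos s).le, Real.exp_le_one_iff.mpr hs⟩
  have hmapIoc : Set.MapsTo Real.exp (Set.Iic (0:ℝ)) (Set.Ioc 0 1) := fun s hs =>
    ⟨Real.exp_pos s, Real.exp_le_one_iff.mpr hs⟩
  have hexp : ∀ s : ℝ, HasDerivWithinAt Real.exp (Real.exp s) (Set.Iic 0) s := fun s =>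
    (Real.hasDerivAt_exp s).hasDerivWithinAt
  refine ⟨?_, ?_, ?_, ?_⟩
  · -- x' = y - x
    intro s hs
    have hζ : HasDerivWithinAt (fun t => g (Real.exp t))
        (Real.exp s ^ 2 * ρ (Real.exp s) * Real.exp s) (Set.Iic 0) s :=
      (zeta_deriv ρ hρc _ (hmapIoc hs)).comp s (hexp s) hmapIcc
    have hexn : HasDerivWithinAt (fun t : ℝ => Real.exp (-t)) (-Real.exp (-s))
        (Set.Iic 0) s := by
      have := ((Real.hasDerivAt_exp (-s)).comp s (hasDerivAt_neg s)).hasDerivWithinAt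
        (s := Set.Iic 0)
      simpa [Function.comp_def] using this
    have hprod := hexn.mul hζ
    refine (hprod.congr (fun t _ => hx t) (hx s)).congr_deriv ?_
    rw [hy s, hx s]
    have h1 : Real.exp (-s) * (Real.exp s ^ 2 * ρ (Real.exp s) * Real.exp s)
        = Real.exp (2 * s) * ρ (Real.exp s) := by
      rw [Real.exp_neg, sq, two_mul, Real.exp_add]
      field_simp
    simp only [hg]
    linarith [h1]
  · -- y' = 2y - ...
    intro s hs
    have hρ' : HasDerivWithinAt (fun t => ρ (Real.exp t))
        (-(R (ρ (Real.exp s)) * g (Real.exp s) / Real.exp s ^ 2) * Real.exp s)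
        (Set.Iic 0) s :=
      (hODE _ (hmapIoc hs)).comp s (hexp s) hmapIoc
    have hex2 : HasDerivWithinAt (fun t : ℝ => Real.exp (2 * t))
        (Real.exp (2 * s) * 2) (Set.Iic 0) s := by
      have := ((Real.hasDerivAt_exp (2 * s)).comp s
        ((hasDerivAt_id s).const_mul 2)).hasDerivWithinAt (s := Set.Iic 0)
      simpa [Function.comp_def] using this
    have hprod := hex2.mul hρ'
    refine (hprod.congr (fun t _ => hy t) (hy s)).congr_deriv ?_
    have harg : Real.exp (-2 * s) * y s = ρ (Real.exp s) := by
      rw [hy s, ← mul_assoc, ← Real.exp_add]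
      norm_num
    rw [harg, hy s, hx s]
    simp only [hg]
    have hes := Real.exp_pos s
    rw [Real.exp_neg, two_mul, Real.exp_add]
    field_simp
    ring
  · rw [hx 0]; norm_num
  · have heq : ∀ s : ℝ, Real.exp (-2 * s) * y s = ρ (Real.exp s) := by
      intro s
      rw [hy s, ← mul_assoc, ← Real.exp_add]
      norm_num
    have hlim : Filter.Tendsto Real.exp Filter.atBot
        (nhdsWithin 0 (Set.Icc (0:ℝ) 1)) := by
      rw [tendsto_nhdsWithin_iff]
      refine ⟨Real.tendsto_exp_atBot, ?_⟩
      filter_upwards [Filter.eventually_le_atBot (0:ℝ)] with s hs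
      exact hmapIcc hs
    have := (hρc 0 ⟨le_rfl, zero_le_one⟩).tendsto.comp hlim
    refine this.congr fun s => (heq s).symm
end

section
/- For every z ∈ ℝ, f_{−1/2}(z) ≤ 2 f_{1/2}(z), where f_α(z) = ∫₀^∞ x^α / (1 + exp(x − z)) dx. Consequently, for any μ > 0, the Fermi–Dirac function R(z) = (μ/4) f_{−1/2}(f_{1/2}^{−1}(2z/μ)) satisfies R(z) ≤ z for all z > 0. -/
open Real Filter Set MeasureTheory

/-- The Fermi function `f_α(z) = ∫₀^∞ x^α / (1 + exp(x − z)) dx`. -/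
noncomputable def fermi (α z : ℝ) : ℝ :=
  ∫ x in Set.Ioi (0 : ℝ), x ^ α / (1 + Real.exp (x - z))

/-- Integrability of the fermi integrand for `α > -1`. -/
lemma fermi_integrand_integrable {α : ℝ} (hα : -1 < α) (z : ℝ) :
    IntegrableOn (fun x : ℝ => x ^ α / (1 + Real.exp (x - z))) (Set.Ioi 0) := by
  have hG : IntegrableOn (fun x : ℝ => Real.exp z * (Real.exp (-x) * x ^ α)) (Set.Ioi 0) := by
    have := (Real.GammaIntegral_convergent (s := α + 1) (by linarith)).const_mul (Real.exp z)
    simpa [IntegrableOn] using this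
  refine Integrable.mono' hG ?_ ?_
  · refine ContinuousOn.aestronglyMeasurable (ContinuousOn.div ?_ ?_ ?_) measurableSet_Ioi
    · exact fun x hx =>
        (Real.continuousAt_rpow_const x α (Or.inl (ne_of_gt hx))).continuousWithinAt
    · exact (continuous_const.add ((Real.continuous_exp.comp
        (continuous_id.sub continuous_const)))).continuousOn
    · intro x _; positivity
  · filter_upwards [ae_restrict_mem measurableSet_Ioi] with x hx
    have hx0 : (0:ℝ) < x := hx
    rw [Real.norm_eq_abs, abs_of_nonneg (by positivity)]
    have h1 : Real.exp (x - z) ≤ 1 + Real.exp (x - z) := by linarith [Real.exp_pos (x - z)]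
    calc x ^ α / (1 + Real.exp (x - z)) ≤ x ^ α / Real.exp (x - z) := by
          gcongr
      _ = Real.exp z * (Real.exp (-x) * x ^ α) := by
          rw [Real.exp_sub, Real.exp_neg]
          field_simp

/-- `f_{−1/2}(z) ≤ 2 f_{1/2}(z)` for all `z ∈ ℝ`; consequently, for
`μ > 0` the Fermi–Dirac nonlinearity `R(z) = (μ/4) f_{−1/2}(f_{1/2}^{−1}(2z/μ))`
satisfies `R(z) ≤ z` for all `z > 0` (stated via any `t` with
`f_{1/2}(t) = 2z/μ`). -/
theorem fermi_half_inequality :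
    (∀ z : ℝ, fermi (-(1 / 2)) z ≤ 2 * fermi (1 / 2) z) ∧
    (∀ μ : ℝ, 0 < μ → ∀ z : ℝ, 0 < z → ∀ t : ℝ,
      fermi (1 / 2) t = 2 * z / μ → μ / 4 * fermi (-(1 / 2)) t ≤ z) := by
  have main : ∀ z : ℝ, fermi (-(1 / 2)) z ≤ 2 * fermi (1 / 2) z := by
    intro z
    set A : ℝ → ℝ := fun x => x ^ (-(1/2 : ℝ)) / (1 + Real.exp (x - z)) with hA
    set B : ℝ → ℝ := fun x =>
      2 * x ^ (1/2 : ℝ) * (Real.exp (x - z) / (1 + Real.exp (x - z)) ^ 2) with hB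
    set C : ℝ → ℝ := fun x => 2 * (x ^ (1/2 : ℝ) / (1 + Real.exp (x - z))) with hC
    set F : ℝ → ℝ := fun x => 2 * x ^ (1/2 : ℝ) / (1 + Real.exp (x - z)) with hF
    have hApos : ∀ x ∈ Set.Ioi (0:ℝ), 0 ≤ A x := by
      intro x hx; have : (0:ℝ) < x := hx; positivity
    have hintA : IntegrableOn A (Set.Ioi 0) := fermi_integrand_integrable (by norm_num) z
    have hintC : IntegrableOn C (Set.Ioi 0) := by
      have := (fermi_integrand_integrable (α := 1/2) (by norm_num) z).const_mul 2
      simpa [hC, IntegrableOn] using this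
    have hBleC : ∀ x ∈ Set.Ioi (0:ℝ), B x ≤ C x := by
      intro x hx
      have hx0 : (0:ℝ) < x := hx
      have he : (0:ℝ) < 1 + Real.exp (x - z) := by positivity
      have h1 : Real.exp (x - z) ≤ 1 + Real.exp (x - z) := by linarith [Real.exp_pos (x - z)]
      have key : Real.exp (x - z) / (1 + Real.exp (x - z)) ^ 2
          ≤ 1 / (1 + Real.exp (x - z)) := by
        rw [div_le_div_iff₀ (by positivity) he]
        nlinarith [Real.exp_pos (x - z)]
      have hxp : (0:ℝ) ≤ x ^ (1/2:ℝ) := by positivity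
      calc B x = 2 * x ^ (1/2:ℝ) * (Real.exp (x - z) / (1 + Real.exp (x - z)) ^ 2) := rfl
        _ ≤ 2 * x ^ (1/2:ℝ) * (1 / (1 + Real.exp (x - z))) := by
            apply mul_le_mul_of_nonneg_left key (by positivity)
        _ = C x := by rw [hC]; ring
    have hBnonneg : ∀ x ∈ Set.Ioi (0:ℝ), 0 ≤ B x := by
      intro x hx; have : (0:ℝ) < x := hx; positivity
    have hBmeas : AEStronglyMeasurable B (volume.restrict (Set.Ioi 0)) := by
      refine ContinuousOn.aestronglyMeasurable ?_ measurableSet_Ioi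
      apply ContinuousOn.mul
      · exact continuousOn_const.mul (fun x hx =>
          (Real.continuousAt_rpow_const x _ (Or.inl (ne_of_gt hx))).continuousWithinAt)
      · apply ContinuousOn.div
        · exact (Real.continuous_exp.comp (continuous_id.sub continuous_const)).continuousOn
        · exact ((continuous_const.add (Real.continuous_exp.comp
            (continuous_id.sub continuous_const))).pow 2).continuousOn
        · intro x _; positivity
    have hintB : IntegrableOn B (Set.Ioi 0) := by
      refine Integrable.mono' hintC hBmeas ?_
      filter_upwards [ae_restrict_mem measurableSet_Ioi] with x hx
      rw [Real.norm_eq_abs, abs_of_nonneg (hBnonneg x hx)]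
      exact hBleC x hx
    -- derivative of F
    have hderiv : ∀ x ∈ Set.Ioi (0:ℝ), HasDerivAt F (A x - B x) x := by
      intro x hx
      have hx0 : (0:ℝ) < x := hx
      have he : (0:ℝ) < 1 + Real.exp (x - z) := by positivity
      have hexp : HasDerivAt (fun x : ℝ => 1 + Real.exp (x - z)) (Real.exp (x - z)) x := by
        have h1 : HasDerivAt (fun x : ℝ => x - z) 1 x := (hasDerivAt_id x).sub_const z
        have h2 := (Real.hasDerivAt_exp (x - z)).comp x h1
        simpa using h2.const_add 1
      have hinv := hexp.inv (ne_of_gt he)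
      have hpow : HasDerivAt (fun x : ℝ => 2 * x ^ (1/2:ℝ)) (x ^ (-(1/2):ℝ)) x := by
        have h := (Real.hasDerivAt_rpow_const (x := x) (p := 1/2)
          (Or.inl (ne_of_gt hx0))).const_mul 2
        refine h.congr_deriv ?_
        rw [show (1/2:ℝ) - 1 = -(1/2) by norm_num]
        ring
      have hmul := hpow.mul hinv
      have : F = fun x => (2 * x ^ (1/2:ℝ)) * (1 + Real.exp (x - z))⁻¹ := by
        funext y; rw [hF]; ring
      rw [this]
      refine hmul.congr_deriv ?_
      rw [hA, hB]
      simp only [Pi.inv_apply]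
      field_simp
      ring
    have hcont : ContinuousWithinAt F (Set.Ici 0) 0 := by
      apply ContinuousAt.continuousWithinAt
      apply ContinuousAt.div
      · exact continuousAt_const.mul
          (Real.continuousAt_rpow_const 0 (1/2) (Or.inr (by norm_num)))
      · exact (continuous_const.add (Real.continuous_exp.comp
          (continuous_id.sub continuous_const))).continuousAt
      · positivity
    have hF0 : F 0 = 0 := by
      simp [hF, Real.zero_rpow (by norm_num : (1/2:ℝ) ≠ 0)]
    have htend : Tendsto F atTop (nhds 0) := by
      have hb : Tendsto (fun x : ℝ => 2 * Real.exp z * (x ^ (1/2:ℝ) * Real.exp (-1 * x)))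
          atTop (nhds 0) := by
        have := (tendsto_rpow_mul_exp_neg_mul_atTop_nhds_zero (1/2) 1 one_pos).const_mul
          (2 * Real.exp z)
        simpa using this
      apply squeeze_zero' (g := fun x => 2 * Real.exp z * (x ^ (1/2:ℝ) * Real.exp (-1 * x)))
      · filter_upwards [eventually_gt_atTop (0:ℝ)] with x hx
        positivity
      · filter_upwards [eventually_gt_atTop (0:ℝ)] with x hx
        have he : (0:ℝ) < 1 + Real.exp (x - z) := by positivity
        have h1 : Real.exp (x - z) ≤ 1 + Real.exp (x - z) := by linarith [Real.exp_pos (x - z)]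
        calc F x ≤ 2 * x ^ (1/2:ℝ) / Real.exp (x - z) := by
              show 2 * x ^ (1/2:ℝ) / (1 + Real.exp (x - z)) ≤ _
              gcongr
          _ = 2 * Real.exp z * (x ^ (1/2:ℝ) * Real.exp (-1 * x)) := by
              rw [Real.exp_sub, neg_one_mul, Real.exp_neg]
              field_simp
      · exact hb
    have hIBP : ∫ x in Set.Ioi (0:ℝ), (A x - B x) = 0 - F 0 :=
      integral_Ioi_of_hasDerivAt_of_tendsto hcont hderiv (hintA.sub hintB) htend
    rw [hF0, sub_zero, integral_sub hintA hintB, sub_eq_zero] at hIBP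
    have h1 : fermi (-(1/2)) z = ∫ x in Set.Ioi (0:ℝ), B x := hIBP
    have h2 : (∫ x in Set.Ioi (0:ℝ), B x) ≤ ∫ x in Set.Ioi (0:ℝ), C x := by
      refine setIntegral_mono_on hintB hintC measurableSet_Ioi hBleC
    have h3 : (∫ x in Set.Ioi (0:ℝ), C x) = 2 * fermi (1/2) z := by
      rw [hC, fermi]
      exact integral_const_mul 2 _
    rw [h1]
    linarith
  refine ⟨main, ?_⟩
  intro μ hμ z hz t ht
  have h := main t
  have : μ / 4 * fermi (-(1/2)) t ≤ μ / 4 * (2 * fermi (1/2) t) := by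
    apply mul_le_mul_of_nonneg_left h (by positivity)
  rw [ht] at this
  calc μ / 4 * fermi (-(1/2)) t ≤ μ / 4 * (2 * (2 * z / μ)) := this
    _ = z := by field_simp; ring
end

section
/- Let R : ℝ → ℝ be continuous with R(z) ≥ 0 for all z ≥ 0. Suppose x, y : (−∞,0] → ℝ are differentiable, satisfy x'(s) = y(s) − x(s) and y'(s) = 2 y(s) − e^{2s} R(e^{−2s} y(s)) x(s) for all s ≤ 0, satisfy x(s) ≥ 0 and y(s) ≥ 0 for all s ≤ 0, and suppose that for some P > 0, e^{−2s} y(s) → P and e^{−2s} x(s) → P/3 as s → −∞. Then for all s ≤ 0: (i) y(s) ≤ P e^{2s}; (ii) 3 x(s) ≥ y(s); and (iii) x(s) ≤ (P/3) e^{2s}. These follow from the identities (e^{−2s} y(s))' = −e^{2s} R(e^{−2s} y(s)) x(s) · e^{−2s} ≤ 0 (i.e. s ↦ e^{−2s}y(s) is nonincreasing), (e^{s}(3x(s) − y(s)))' = e^{3s} R(e^{−2s} y(s)) x(s) ≥ 0, and (e^{−2s} x(s))' = −e^{−2s}(3x(s) − y(s)) ≤ 0. -/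
open Real Filter Set

/-- for a nonnegative trajectory of the non-autonomous system on
`(−∞,0]` with `R ≥ 0` on `[0,∞)` and limits `e^{−2s} y(s) → P`,
`e^{−2s} x(s) → P/3` as `s → −∞`, one has for all `s ≤ 0`:
(i) `y(s) ≤ P e^{2s}`; (ii) `3 x(s) ≥ y(s)`; (iii) `x(s) ≤ (P/3) e^{2s}`. -/
theorem a_priori_bounds (R x y : ℝ → ℝ) (P : ℝ) (hP : 0 < P)
    (hRc : Continuous R)
    (hR : ∀ z : ℝ, 0 ≤ z → 0 ≤ R z)
    (hx : ∀ s ≤ (0 : ℝ), HasDerivWithinAt x (y s - x s) (Set.Iic 0) s)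
    (hy : ∀ s ≤ (0 : ℝ), HasDerivWithinAt y
      (2 * y s - Real.exp (2 * s) * R (Real.exp (-2 * s) * y s) * x s) (Set.Iic 0) s)
    (hpos : ∀ s ≤ (0 : ℝ), 0 ≤ x s ∧ 0 ≤ y s)
    (hylim : Filter.Tendsto (fun s => Real.exp (-2 * s) * y s) Filter.atBot (nhds P))
    (hxlim : Filter.Tendsto (fun s => Real.exp (-2 * s) * x s) Filter.atBot (nhds (P / 3))) :
    ∀ s ≤ (0 : ℝ),
      y s ≤ P * Real.exp (2 * s) ∧
      y s ≤ 3 * x s ∧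
      x s ≤ P / 3 * Real.exp (2 * s) := by
  have hIic : interior (Set.Iic (0:ℝ)) = Set.Iio 0 := interior_Iic
  have hexp : ∀ s : ℝ, ∀ c : ℝ, HasDerivAt (fun t => Real.exp (c * t)) (c * Real.exp (c * s)) s := by
    intro s c
    have h := (Real.hasDerivAt_exp (c * s)).comp s ((hasDerivAt_id s).const_mul c)
    exact h.congr_deriv (by ring)
  have hee : ∀ s : ℝ, Real.exp (-2 * s) * Real.exp (2 * s) = 1 := by
    intro s; rw [← Real.exp_add]; norm_num
  -- nonnegativity of R along the trajectory
  have hRnn : ∀ s ≤ (0:ℝ), 0 ≤ R (Real.exp (-2 * s) * y s) :=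
    fun s hs => hR _ (mul_nonneg (Real.exp_pos _).le (hpos s hs).2)
  -- u = e^{-2s} y s
  set u : ℝ → ℝ := fun s => Real.exp (-2 * s) * y s with hu_def
  have hu' : ∀ s ≤ (0:ℝ), HasDerivWithinAt u (-(R (u s) * x s)) (Set.Iic 0) s := by
    intro s hs
    have h := ((hexp s (-2)).hasDerivWithinAt (s := Set.Iic 0)).mul (hy s hs)
    refine h.congr_deriv (Eq.symm ?_)
    have h1 := hee s
    simp only [hu_def]
    linear_combination (R (Real.exp (-2*s) * y s) * x s) * h1
  -- v = e^s (3 x s - y s)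
  set v : ℝ → ℝ := fun s => Real.exp (1 * s) * (3 * x s - y s) with hv_def
  have hv' : ∀ s ≤ (0:ℝ), HasDerivWithinAt v
      (Real.exp (1 * s) * Real.exp (2 * s) * R (u s) * x s) (Set.Iic 0) s := by
    intro s hs
    have h := ((hexp s 1).hasDerivWithinAt (s := Set.Iic 0)).mul
      (((hx s hs).const_mul 3).sub (hy s hs))
    refine h.congr_deriv (Eq.symm ?_)
    simp only [hu_def, Pi.sub_apply]
    ring
  -- w = e^{-2s} x s
  set w : ℝ → ℝ := fun s => Real.exp (-2 * s) * x s with hw_def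
  have hw' : ∀ s ≤ (0:ℝ), HasDerivWithinAt w
      (Real.exp (-2 * s) * (y s - 3 * x s)) (Set.Iic 0) s := by
    intro s hs
    have h := ((hexp s (-2)).hasDerivWithinAt (s := Set.Iic 0)).mul (hx s hs)
    refine h.congr_deriv (Eq.symm ?_)
    ring
  -- v is monotone on Iic 0
  have hvmono : MonotoneOn v (Set.Iic 0) := by
    apply monotoneOn_of_hasDerivWithinAt_nonneg (convex_Iic 0)
      (f' := fun s => Real.exp (1 * s) * Real.exp (2 * s) * R (u s) * x s)
    · intro s hs; exact ((hv' s hs).continuousWithinAt)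
    · intro s hs
      rw [hIic] at hs ⊢
      exact (hv' s hs.le).mono Set.Iio_subset_Iic_self
    · intro s hs
      rw [hIic] at hs
      exact mul_nonneg (mul_nonneg (mul_nonneg (Real.exp_pos _).le (Real.exp_pos _).le)
        (hRnn s hs.le)) (hpos s hs.le).1
  -- v tends to 0 at -∞
  have hvlim : Filter.Tendsto v Filter.atBot (nhds 0) := by
    have heq : v = fun s => Real.exp (3 * s) *
        (3 * (Real.exp (-2 * s) * x s) - Real.exp (-2 * s) * y s) := by
      funext s
      simp only [hv_def]
      have h1 := hee s
      have h2 : Real.exp (3 * s) * Real.exp (-2 * s) = Real.exp (1 * s) := by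
        rw [← Real.exp_add]; ring_nf
      linear_combination (y s - 3 * x s) * h2
    rw [heq]
    have h1 : Filter.Tendsto (fun s : ℝ => Real.exp (3 * s)) Filter.atBot (nhds 0) := by
      apply Real.tendsto_exp_atBot.comp
      exact (tendsto_const_mul_atBot_of_pos (by norm_num)).mpr tendsto_id
    have h2 : Filter.Tendsto (fun s => 3 * (Real.exp (-2 * s) * x s) - Real.exp (-2 * s) * y s)
        Filter.atBot (nhds (3 * (P / 3) - P)) := (hxlim.const_mul 3).sub hylim
    have := h1.mul h2
    simpa using this
  -- (ii): y s ≤ 3 x s for s ≤ 0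
  have hii : ∀ s ≤ (0:ℝ), y s ≤ 3 * x s := by
    intro s hs
    have hv0 : 0 ≤ v s := by
      apply le_of_tendsto hvlim
      filter_upwards [Filter.eventually_le_atBot s] with t ht
      exact hvmono (ht.trans hs) hs ht
    have he := (Real.exp_pos (1 * s))
    simp only [hv_def] at hv0
    nlinarith
  -- u is antitone on Iic 0
  have humono : AntitoneOn u (Set.Iic 0) := by
    apply antitoneOn_of_hasDerivWithinAt_nonpos (convex_Iic 0)
      (f' := fun s => -(R (u s) * x s))
    · intro s hs; exact ((hu' s hs).continuousWithinAt)
    · intro s hs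
      rw [hIic] at hs ⊢
      exact (hu' s hs.le).mono Set.Iio_subset_Iic_self
    · intro s hs
      rw [hIic] at hs
      exact neg_nonpos.2 (mul_nonneg (hRnn s hs.le) (hpos s hs.le).1)
  have hi : ∀ s ≤ (0:ℝ), y s ≤ P * Real.exp (2 * s) := by
    intro s hs
    have huP : u s ≤ P := by
      apply ge_of_tendsto hylim
      filter_upwards [Filter.eventually_le_atBot s] with t ht
      exact humono (ht.trans hs) hs ht
    have he := hee s
    simp only [hu_def] at huP
    have h2 := mul_le_mul_of_nonneg_right huP (Real.exp_pos (2 * s)).le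
    have h3 : Real.exp (-2 * s) * y s * Real.exp (2 * s) = y s := by
      linear_combination y s * hee s
    linarith
  -- w is antitone on Iic 0
  have hwmono : AntitoneOn w (Set.Iic 0) := by
    apply antitoneOn_of_hasDerivWithinAt_nonpos (convex_Iic 0)
      (f' := fun s => Real.exp (-2 * s) * (y s - 3 * x s))
    · intro s hs; exact ((hw' s hs).continuousWithinAt)
    · intro s hs
      rw [hIic] at hs ⊢
      exact (hw' s hs.le).mono Set.Iio_subset_Iic_self
    · intro s hs
      rw [hIic] at hs
      exact mul_nonpos_of_nonneg_of_nonpos (Real.exp_pos _).le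
        (sub_nonpos.2 (hii s hs.le))
  have hiii : ∀ s ≤ (0:ℝ), x s ≤ P / 3 * Real.exp (2 * s) := by
    intro s hs
    have hwP : w s ≤ P / 3 := by
      apply ge_of_tendsto hxlim
      filter_upwards [Filter.eventually_le_atBot s] with t ht
      exact hwmono (ht.trans hs) hs ht
    have he := hee s
    simp only [hw_def] at hwP
    have h2 := mul_le_mul_of_nonneg_right hwP (Real.exp_pos (2 * s)).le
    have h3 : Real.exp (-2 * s) * x s * Real.exp (2 * s) = x s := by
      linear_combination x s * hee s
    linarith
  exact fun s hs => ⟨hi s hs, hii s hs, hiii s hs⟩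
end

section
/- Fix ρ₀ > 0 and ρ ∈ (0, ρ₀]. For η ≥ 0, let R_η(z) = z/(1 + η z^{2/3}) for z ≥ 0 (so R₀(z) = z), extended continuously by R_η(z) = z for z < 0. Let η > 0 and suppose (x_η, y_η) and (x₀, y₀) are differentiable on (−∞,0], take nonnegative values there, solve respectively x' = y − x, y' = 2y − e^{2s} R_η(e^{−2s} y) x and x' = y − x, y' = 2y − e^{2s} R₀(e^{−2s} y) x, and both satisfy lim_{s→−∞} e^{−2s} y(s) = ρ and lim_{s→−∞} e^{−2s} x(s) = ρ/3. Then for all t ≤ 0: e^{−2t} |y_η(t) − y₀(t)| ≤ (η/6) ρ₀^{8/3} e^{ρ₀/3} and e^{−2t} |x_η(t) − x₀(t)| ≤ (η/18) ρ₀^{8/3} e^{ρ₀/3}. In particular, x_η → x₀ and y_η → y₀ uniformly on (−∞,0] as η → 0⁺. -/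
open Real Filter Set

/-- The simplified Fermi–Dirac nonlinearity `R_η(z) = z/(1 + η z^{2/3})` for
`z ≥ 0`, extended by `R_η(z) = z` for `z < 0`; `R₀(z) = z`. -/
noncomputable def Rfun (η z : ℝ) : ℝ :=
  if 0 ≤ z then z / (1 + η * z ^ ((2 : ℝ) / 3)) else z

lemma Rfun_zero (z : ℝ) : Rfun 0 z = z := by
  unfold Rfun; split <;> simp

lemma Rfun_nonneg {η z : ℝ} (hη : 0 ≤ η) (hz : 0 ≤ z) : 0 ≤ Rfun η z := by
  unfold Rfun
  rw [if_pos hz]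
  have h1 : (0:ℝ) < 1 + η * z ^ ((2 : ℝ) / 3) := by
    have := Real.rpow_nonneg hz ((2:ℝ)/3)
    nlinarith
  positivity

lemma Rfun_le {η z : ℝ} (hη : 0 ≤ η) (hz : 0 ≤ z) : Rfun η z ≤ z := by
  unfold Rfun
  rw [if_pos hz]
  have h0 : (0:ℝ) ≤ η * z ^ ((2 : ℝ) / 3) := by
    have := Real.rpow_nonneg hz ((2:ℝ)/3)
    positivity
  have h1 : (0:ℝ) < 1 + η * z ^ ((2 : ℝ) / 3) := by linarith
  rw [div_le_iff₀ h1]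
  nlinarith

lemma Rfun_defect {η z ρ₀ : ℝ} (hη : 0 ≤ η) (hz : 0 ≤ z) (hρ₀ : 0 ≤ ρ₀) (hzρ : z ≤ ρ₀) :
    z - Rfun η z ≤ η * ρ₀ ^ ((2 : ℝ) / 3) * ρ₀ := by
  unfold Rfun
  rw [if_pos hz]
  have h0 : (0:ℝ) ≤ z ^ ((2 : ℝ) / 3) := Real.rpow_nonneg hz _
  have h1 : (0:ℝ) < 1 + η * z ^ ((2 : ℝ) / 3) := by nlinarith
  have key : z - z / (1 + η * z ^ ((2 : ℝ) / 3)) = z * (η * z ^ ((2 : ℝ) / 3)) / (1 + η * z ^ ((2 : ℝ) / 3)) := by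
    field_simp
    ring
  rw [key]
  have h2 : z * (η * z ^ ((2 : ℝ) / 3)) / (1 + η * z ^ ((2 : ℝ) / 3)) ≤ z * (η * z ^ ((2 : ℝ) / 3)) := by
    apply div_le_self (by positivity) (by nlinarith)
  refine h2.trans ?_
  have h3 : z ^ ((2 : ℝ) / 3) ≤ ρ₀ ^ ((2 : ℝ) / 3) :=
    Real.rpow_le_rpow hz hzρ (by norm_num)
  calc z * (η * z ^ ((2 : ℝ) / 3)) ≤ ρ₀ * (η * ρ₀ ^ ((2 : ℝ) / 3)) := by
        apply mul_le_mul hzρ (by nlinarith) (by positivity) hρ₀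
    _ = η * ρ₀ ^ ((2 : ℝ) / 3) * ρ₀ := by ring

/-- continuity of `Rfun η` on nonnegative reals -/
lemma Rfun_continuousOn {η : ℝ} (hη : 0 ≤ η) : ContinuousOn (Rfun η) (Ici 0) := by
  have hc : ContinuousOn (fun z : ℝ => z / (1 + η * z ^ ((2 : ℝ) / 3))) (Ici 0) := by
    apply ContinuousOn.div continuousOn_id
    · apply ContinuousOn.add continuousOn_const
      apply ContinuousOn.mul continuousOn_const
      apply Continuous.continuousOn
      apply continuous_iff_continuousAt.2
      intro z
      rcases eq_or_ne z 0 with rfl | hz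
      · exact Real.continuousAt_rpow_const 0 _ (Or.inr (by norm_num))
      · exact Real.continuousAt_rpow_const z _ (Or.inl hz)
    · intro z hz
      have hz' : (0:ℝ) ≤ z := hz
      have h0 : (0:ℝ) ≤ z ^ ((2 : ℝ) / 3) := Real.rpow_nonneg hz' _
      intro h
      nlinarith [mul_nonneg hη h0]
  apply hc.congr
  intro z hz
  have hz' : (0:ℝ) ≤ z := hz
  unfold Rfun
  rw [if_pos hz']

section Tools

open Real Filter Set MeasureTheory intervalIntegral

/-- monotone on `Iic 0` from nonnegative derivative within. -/
lemma monoOn_Iic_of_deriv {h h' : ℝ → ℝ}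
    (hd : ∀ s ≤ (0:ℝ), HasDerivWithinAt h (h' s) (Iic 0) s)
    (h0 : ∀ s ≤ (0:ℝ), 0 ≤ h' s) : MonotoneOn h (Iic 0) := by
  apply monotoneOn_of_hasDerivWithinAt_nonneg (convex_Iic 0)
    (f' := h')
  · intro s hs
    exact (hd s hs).continuousWithinAt
  · intro x hx
    rw [interior_Iic] at hx
    exact (((hd x hx.le).hasDerivAt (Iic_mem_nhds hx)).hasDerivWithinAt)
  · intro x hx
    rw [interior_Iic] at hx
    exact h0 x hx.le

lemma le_of_monoOn_limit {h : ℝ → ℝ} {L : ℝ} (hm : MonotoneOn h (Iic 0))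
    (hlim : Filter.Tendsto h atBot (nhds L)) {t : ℝ} (ht : t ≤ 0) : L ≤ h t := by
  refine le_of_tendsto hlim ?_
  filter_upwards [eventually_le_atBot t] with s hs
  exact hm (le_trans hs ht) ht hs

/-- nonnegativity from nonneg derivative within `Iic 0` and limit `0` at `-∞`. -/
lemma nonneg_of_deriv_limit {h h' : ℝ → ℝ}
    (hd : ∀ s ≤ (0:ℝ), HasDerivWithinAt h (h' s) (Iic 0) s)
    (h0 : ∀ s ≤ (0:ℝ), 0 ≤ h' s)
    (hlim : Filter.Tendsto h atBot (nhds 0)) : ∀ t ≤ (0:ℝ), 0 ≤ h t :=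
  fun _ ht => le_of_monoOn_limit (monoOn_Iic_of_deriv hd h0) hlim ht

/-- nonpositivity from nonpos derivative within `Iic 0` and limit `0` at `-∞`. -/
lemma nonpos_of_deriv_limit {h h' : ℝ → ℝ}
    (hd : ∀ s ≤ (0:ℝ), HasDerivWithinAt h (h' s) (Iic 0) s)
    (h0 : ∀ s ≤ (0:ℝ), h' s ≤ 0)
    (hlim : Filter.Tendsto h atBot (nhds 0)) : ∀ t ≤ (0:ℝ), h t ≤ 0 := by
  intro t ht
  have := nonneg_of_deriv_limit (h := fun s => -h s) (h' := fun s => -h' s)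
    (fun s hs => (hd s hs).neg) (fun s hs => neg_nonneg.2 (h0 s hs)) (by simpa using hlim.neg) t ht
  have h2 : 0 ≤ -h t := this
  linarith

lemma hasDerivAt_exp_mul (c t : ℝ) :
    HasDerivAt (fun s : ℝ => Real.exp (c * s)) (c * Real.exp (c * t)) t := by
  have h := ((hasDerivAt_id t).const_mul c).exp
  simpa [mul_comm] using h

lemma intervalIntegral_exp_mul {c : ℝ} (hc : c ≠ 0) (y t : ℝ) :
    ∫ s in y..t, Real.exp (c * s) = Real.exp (c * t) / c - Real.exp (c * y) / c := by
  have hderiv : ∀ x ∈ Set.uIcc y t, HasDerivAt (fun s : ℝ => Real.exp (c * s) / c)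
      (Real.exp (c * x)) x := by
    intro x _
    have := (hasDerivAt_exp_mul c x).div_const c
    simpa [mul_div_assoc, mul_div_cancel_left₀ _ hc] using this
  have hint : IntervalIntegrable (fun s : ℝ => Real.exp (c * s)) volume y t :=
    (Real.continuous_exp.comp (continuous_const.mul continuous_id)).intervalIntegrable y t
  simpa using intervalIntegral.integral_eq_sub_of_hasDerivAt hderiv hint

lemma tendsto_exp_mul_atBot {c : ℝ} (hc : 0 < c) :
    Filter.Tendsto (fun s : ℝ => Real.exp (c * s)) atBot (nhds 0) :=
  Real.tendsto_exp_atBot.comp (Filter.Tendsto.const_mul_atBot hc tendsto_id)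

end Tools

section FTC

open Real Filter Set MeasureTheory intervalIntegral

variable {h : ℝ → ℝ}

lemma integral_Iic_rep (hint : IntegrableOn h (Iic (0:ℝ))) {τ : ℝ} (hτ : τ ≤ 0) :
    (∫ s in Iic τ, h s) = (∫ s in Iic (0:ℝ), h s) + ∫ s in (0:ℝ)..τ, h s := by
  have hsplit : (∫ s in Iic (0:ℝ), h s) = (∫ s in Iic τ, h s) + ∫ s in Ioc τ 0, h s := by
    rw [← MeasureTheory.setIntegral_union (Iic_disjoint_Ioc le_rfl) measurableSet_Ioc
      (hint.mono_set (Iic_subset_Iic.2 hτ)) (hint.mono_set Ioc_subset_Iic_self),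
      Iic_union_Ioc_eq_Iic hτ]
  rw [intervalIntegral.integral_symm, intervalIntegral.integral_of_le hτ]
  linarith

lemma hasDerivWithinAt_integral_Iic (hcont : ContinuousOn h (Iic (0:ℝ)))
    (hint : IntegrableOn h (Iic (0:ℝ))) {t : ℝ} (ht : t ≤ 0) :
    HasDerivWithinAt (fun τ => ∫ s in Iic τ, h s) (h t) (Iic 0) t := by
  have hmeasIic : AEStronglyMeasurable h (volume.restrict (Iic (0:ℝ))) :=
    hcont.aestronglyMeasurable measurableSet_Iic
  have core : HasDerivWithinAt (fun τ => ∫ s in (0:ℝ)..τ, h s) (h t) (Iic 0) t := by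
    rcases eq_or_lt_of_le ht with rfl | hlt
    · exact intervalIntegral.integral_hasDerivWithinAt_right
        (by simp)
        ⟨Iic 0, self_mem_nhdsWithin, hmeasIic⟩
        (hcont 0 self_mem_Iic)
    · have hii : IntervalIntegrable h volume 0 t := by
        apply (hint.mono_set ?_).intervalIntegrable
        rw [Set.uIcc_of_ge ht]
        exact Set.Icc_subset_Iic_self
      have hmem : Iic (0:ℝ) ∈ nhds t := Iic_mem_nhds hlt
      exact ((intervalIntegral.integral_hasDerivAt_right hii
        ⟨Iic 0, hmem, hmeasIic⟩
        ((hcont t ht).continuousAt hmem)).hasDerivWithinAt)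
  have : HasDerivWithinAt (fun τ => (∫ s in Iic (0:ℝ), h s) + ∫ s in (0:ℝ)..τ, h s)
      (h t) (Iic 0) t := core.const_add _
  apply this.congr
  · intro τ hτ
    exact integral_Iic_rep hint hτ
  · exact integral_Iic_rep hint ht

lemma integral_Iic_mono_set (hint : IntegrableOn h (Iic (0:ℝ)))
    (hpos : ∀ s ≤ (0:ℝ), 0 ≤ h s) {a b : ℝ} (hab : a ≤ b) (hb : b ≤ 0) :
    (∫ s in Iic a, h s) ≤ ∫ s in Iic b, h s := by
  apply MeasureTheory.setIntegral_mono_set (hint.mono_set (Iic_subset_Iic.2 hb))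
  · rw [EventuallyLE, ae_restrict_iff' measurableSet_Iic]
    exact Filter.Eventually.of_forall (fun s hs => hpos s (le_trans hs hb))
  · exact (Iic_subset_Iic.2 hab).eventuallyLE

lemma integral_Iic_nonneg (hpos : ∀ s ≤ (0:ℝ), 0 ≤ h s) {t : ℝ} (ht : t ≤ 0) :
    0 ≤ ∫ s in Iic t, h s :=
  MeasureTheory.setIntegral_nonneg measurableSet_Iic (fun s hs => hpos s (le_trans hs ht))

end FTC

section Apriori

open Real Filter Set MeasureTheory

lemma apriori_bounds {ρ : ℝ} {u v g : ℝ → ℝ}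
    (hdu : ∀ s ≤ (0:ℝ), HasDerivWithinAt u (g s) (Iic 0) s)
    (hg : ∀ s ≤ (0:ℝ), g s ≤ 0)
    (hdv : ∀ s ≤ (0:ℝ), HasDerivWithinAt v (u s - 3 * v s) (Iic 0) s)
    (hulim : Filter.Tendsto u atBot (nhds ρ))
    (hvlim : Filter.Tendsto v atBot (nhds (ρ/3))) :
    ∀ t ≤ (0:ℝ), u t ≤ ρ ∧ v t ≤ ρ/3 := by
  have hu : ∀ t ≤ (0:ℝ), u t ≤ ρ := by
    intro t ht
    have hmono := monoOn_Iic_of_deriv (h := fun s => -u s) (h' := fun s => -g s)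
      (fun s hs => (hdu s hs).neg) (fun s hs => neg_nonneg.2 (hg s hs))
    have hlim2 : Filter.Tendsto (fun s => -u s) atBot (nhds (-ρ)) := hulim.neg
    have := le_of_monoOn_limit hmono hlim2 ht
    simp only [neg_le_neg_iff] at this
    linarith [this]
  intro t ht
  refine ⟨hu t ht, ?_⟩
  have hdw : ∀ s ≤ (0:ℝ), HasDerivWithinAt (fun s => Real.exp (3*s) * (v s - ρ/3))
      (Real.exp (3*s) * (u s - ρ)) (Iic 0) s := by
    intro s hs
    have h1 := ((hasDerivAt_exp_mul 3 s).hasDerivWithinAt (s := Iic 0)).mul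
      ((hdv s hs).sub_const (ρ/3))
    refine h1.congr_deriv ?_
    ring
  have hwlim : Filter.Tendsto (fun s => Real.exp (3*s) * (v s - ρ/3)) atBot (nhds 0) := by
    have h2 : Filter.Tendsto (fun s => v s - ρ/3) atBot (nhds 0) := by
      simpa using hvlim.sub_const (ρ/3)
    simpa using (tendsto_exp_mul_atBot (by norm_num : (0:ℝ) < 3)).mul h2
  have hsign : ∀ s ≤ (0:ℝ), Real.exp (3*s) * (u s - ρ) ≤ 0 := by
    intro s hs
    have h1 : u s - ρ ≤ 0 := sub_nonpos.2 (hu s hs)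
    have h2 : (0:ℝ) ≤ Real.exp (3*s) := (Real.exp_pos _).le
    nlinarith
  have hwle := nonpos_of_deriv_limit hdw hsign hwlim t ht
  by_contra hcon
  push_neg at hcon
  nlinarith [mul_pos (Real.exp_pos (3*t)) (sub_pos.2 hcon), hwle]

end Apriori

open Real Filter Set MeasureTheory intervalIntegral in
set_option maxHeartbeats 1000000 in
/-- quantitative comparison between solutions of the simplified
Fermi–Dirac system (`η > 0`) and of the Maxwell–Boltzmann system (`η = 0`),
having identical limiting behavior `e^{−2s} y → ρ`, `e^{−2s} x → ρ/3` as
`s → −∞`, with `0 < ρ ≤ ρ₀`: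
`e^{−2t}|y_η − y₀| ≤ (η/6) ρ₀^{8/3} e^{ρ₀/3}` and
`e^{−2t}|x_η − x₀| ≤ (η/18) ρ₀^{8/3} e^{ρ₀/3}` on `(−∞,0]`.
In particular `(x_η, y_η) → (x₀, y₀)` uniformly on `(−∞,0]` as `η → 0⁺`. -/
theorem sfd_to_mb_uniform_estimate (ρ₀ ρ η : ℝ) (hρ₀ : 0 < ρ₀)
    (hρ : ρ ∈ Set.Ioc 0 ρ₀) (hη : 0 < η)
    (xη yη x₀ y₀ : ℝ → ℝ)
    (hxη : ∀ s ≤ (0 : ℝ), HasDerivWithinAt xη (yη s - xη s) (Set.Iic 0) s)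
    (hyη : ∀ s ≤ (0 : ℝ), HasDerivWithinAt yη
      (2 * yη s - Real.exp (2 * s) * Rfun η (Real.exp (-2 * s) * yη s) * xη s)
      (Set.Iic 0) s)
    (hx₀ : ∀ s ≤ (0 : ℝ), HasDerivWithinAt x₀ (y₀ s - x₀ s) (Set.Iic 0) s)
    (hy₀ : ∀ s ≤ (0 : ℝ), HasDerivWithinAt y₀
      (2 * y₀ s - Real.exp (2 * s) * Rfun 0 (Real.exp (-2 * s) * y₀ s) * x₀ s)
      (Set.Iic 0) s)
    (hηpos : ∀ s ≤ (0 : ℝ), 0 ≤ xη s ∧ 0 ≤ yη s)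
    (h₀pos : ∀ s ≤ (0 : ℝ), 0 ≤ x₀ s ∧ 0 ≤ y₀ s)
    (hyηlim : Filter.Tendsto (fun s => Real.exp (-2 * s) * yη s) Filter.atBot (nhds ρ))
    (hxηlim : Filter.Tendsto (fun s => Real.exp (-2 * s) * xη s) Filter.atBot (nhds (ρ / 3)))
    (hy₀lim : Filter.Tendsto (fun s => Real.exp (-2 * s) * y₀ s) Filter.atBot (nhds ρ))
    (hx₀lim : Filter.Tendsto (fun s => Real.exp (-2 * s) * x₀ s) Filter.atBot (nhds (ρ / 3))) :
    ∀ t ≤ (0 : ℝ),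
      Real.exp (-2 * t) * |yη t - y₀ t| ≤
        η / 6 * ρ₀ ^ ((8 : ℝ) / 3) * Real.exp (ρ₀ / 3) ∧
      Real.exp (-2 * t) * |xη t - x₀ t| ≤
        η / 18 * ρ₀ ^ ((8 : ℝ) / 3) * Real.exp (ρ₀ / 3) := by
  obtain ⟨hρpos, hρle⟩ := hρ
  set uη : ℝ → ℝ := fun s => Real.exp (-2 * s) * yη s with huη_def
  set vη : ℝ → ℝ := fun s => Real.exp (-2 * s) * xη s with hvη_def
  set u0 : ℝ → ℝ := fun s => Real.exp (-2 * s) * y₀ s with hu0_def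
  set v0 : ℝ → ℝ := fun s => Real.exp (-2 * s) * x₀ s with hv0_def
  have hee : ∀ s : ℝ, Real.exp (-2 * s) * Real.exp (2 * s) = 1 := by
    intro s
    rw [← Real.exp_add, show (-2 * s + 2 * s : ℝ) = 0 by ring, Real.exp_zero]
  -- nonnegativity of rescaled functions
  have huηnn : ∀ s ≤ (0:ℝ), 0 ≤ uη s := by
    intro s hs; simp only [huη_def]; exact mul_nonneg (Real.exp_pos _).le (hηpos s hs).2
  have hvηnn : ∀ s ≤ (0:ℝ), 0 ≤ vη s := by
    intro s hs; simp only [hvη_def]; exact mul_nonneg (Real.exp_pos _).le (hηpos s hs).1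
  have hu0nn : ∀ s ≤ (0:ℝ), 0 ≤ u0 s := by
    intro s hs; simp only [hu0_def]; exact mul_nonneg (Real.exp_pos _).le (h₀pos s hs).2
  have hv0nn : ∀ s ≤ (0:ℝ), 0 ≤ v0 s := by
    intro s hs; simp only [hv0_def]; exact mul_nonneg (Real.exp_pos _).le (h₀pos s hs).1
  -- derivatives of the rescaled functions
  have hduη : ∀ s ≤ (0:ℝ), HasDerivWithinAt uη (-(Rfun η (uη s) * xη s)) (Iic 0) s := by
    intro s hs
    have h1 := ((hasDerivAt_exp_mul (-2) s).hasDerivWithinAt (s := Iic 0)).mul (hyη s hs)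
    simp only [huη_def]
    refine h1.congr_deriv ?_
    try simp only [huη_def]
    linear_combination (-(Rfun η (Real.exp (-2 * s) * yη s) * xη s)) * hee s
  have hdu0 : ∀ s ≤ (0:ℝ), HasDerivWithinAt u0 (-(Rfun 0 (u0 s) * x₀ s)) (Iic 0) s := by
    intro s hs
    have h1 := ((hasDerivAt_exp_mul (-2) s).hasDerivWithinAt (s := Iic 0)).mul (hy₀ s hs)
    simp only [hu0_def]
    refine h1.congr_deriv ?_
    try simp only [hu0_def]
    linear_combination (-(Rfun 0 (Real.exp (-2 * s) * y₀ s) * x₀ s)) * hee s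
  have hdvη : ∀ s ≤ (0:ℝ), HasDerivWithinAt vη (uη s - 3 * vη s) (Iic 0) s := by
    intro s hs
    have h1 := ((hasDerivAt_exp_mul (-2) s).hasDerivWithinAt (s := Iic 0)).mul (hxη s hs)
    simp only [hvη_def, huη_def]
    refine h1.congr_deriv ?_
    ring
  have hdv0 : ∀ s ≤ (0:ℝ), HasDerivWithinAt v0 (u0 s - 3 * v0 s) (Iic 0) s := by
    intro s hs
    have h1 := ((hasDerivAt_exp_mul (-2) s).hasDerivWithinAt (s := Iic 0)).mul (hx₀ s hs)
    simp only [hv0_def, hu0_def]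
    refine h1.congr_deriv ?_
    ring
  -- a priori bounds
  have hbη := apriori_bounds (g := fun s => -(Rfun η (uη s) * xη s)) hduη
    (fun s hs => neg_nonpos.2 (mul_nonneg (Rfun_nonneg hη.le (huηnn s hs)) (hηpos s hs).1))
    hdvη hyηlim hxηlim
  have hb0 := apriori_bounds (g := fun s => -(Rfun 0 (u0 s) * x₀ s)) hdu0
    (fun s hs => neg_nonpos.2 (mul_nonneg (Rfun_nonneg le_rfl (hu0nn s hs)) (h₀pos s hs).1))
    hdv0 hy₀lim hx₀lim
  have huηle : ∀ s ≤ (0:ℝ), uη s ≤ ρ₀ := fun s hs => le_trans (hbη s hs).1 hρle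
  have hu0le : ∀ s ≤ (0:ℝ), u0 s ≤ ρ₀ := fun s hs => le_trans (hb0 s hs).1 hρle
  have hvηle : ∀ s ≤ (0:ℝ), vη s ≤ ρ₀ / 3 := fun s hs =>
    le_trans (hbη s hs).2 (by linarith)
  have hv0le : ∀ s ≤ (0:ℝ), v0 s ≤ ρ₀ / 3 := fun s hs =>
    le_trans (hb0 s hs).2 (by linarith)
  -- the differences
  set U : ℝ → ℝ := fun s => uη s - u0 s with hU_def
  set V : ℝ → ℝ := fun s => vη s - v0 s with hV_def
  set Fd : ℝ → ℝ := fun s => -(Rfun η (uη s) * xη s) - -(Rfun 0 (u0 s) * x₀ s) with hFd_def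
  have hdU : ∀ s ≤ (0:ℝ), HasDerivWithinAt U (Fd s) (Iic 0) s :=
    fun s hs => (hduη s hs).sub (hdu0 s hs)
  have hdV : ∀ s ≤ (0:ℝ), HasDerivWithinAt V (U s - 3 * V s) (Iic 0) s := by
    intro s hs
    have h1 := (hdvη s hs).sub (hdv0 s hs)
    refine h1.congr_deriv ?_
    simp only [hU_def, hV_def]
    ring
  have hUcont : ContinuousOn U (Iic 0) := fun s hs => ((hdU s hs).continuousWithinAt)
  have hVcont : ContinuousOn V (Iic 0) := fun s hs => ((hdV s hs).continuousWithinAt)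
  have hUbd : ∀ s ≤ (0:ℝ), |U s| ≤ ρ₀ := by
    intro s hs
    simp only [hU_def]
    rw [abs_le]
    constructor <;> [nlinarith [huηnn s hs, hu0le s hs]; nlinarith [hu0nn s hs, huηle s hs]]
  have hVbd : ∀ s ≤ (0:ℝ), |V s| ≤ ρ₀ / 3 := by
    intro s hs
    simp only [hV_def]
    rw [abs_le]
    constructor <;> [nlinarith [hvηnn s hs, hv0le s hs]; nlinarith [hv0nn s hs, hvηle s hs]]
  -- the source term constant
  set B : ℝ := η * ρ₀ ^ ((2:ℝ)/3) * ρ₀ ^ 2 / 3 with hB_def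
  have hBnn : 0 ≤ B := by
    have := Real.rpow_nonneg hρ₀.le ((2:ℝ)/3)
    positivity
  set f : ℝ → ℝ := fun s => ρ₀ / 3 * |U s| + ρ₀ * |V s| with hf_def
  have hfcont : ContinuousOn f (Iic 0) :=
    (continuousOn_const.mul hUcont.abs).add (continuousOn_const.mul hVcont.abs)
  have hfnn : ∀ s ≤ (0:ℝ), 0 ≤ f s := by
    intro s hs
    simp only [hf_def]
    positivity
  have hfbd : ∀ s ≤ (0:ℝ), f s ≤ 2/3 * ρ₀ ^ 2 := by
    intro s hs
    simp only [hf_def]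
    nlinarith [hUbd s hs, hVbd s hs, abs_nonneg (U s), abs_nonneg (V s)]
  -- the key pointwise bound on Fd
  have hF : ∀ s ≤ (0:ℝ), |Fd s| ≤ Real.exp (2*s) * (B + f s) := by
    intro s hs
    have hxv : xη s = Real.exp (2*s) * vη s := by
      simp only [hvη_def]
      rw [← mul_assoc, mul_comm (Real.exp (2*s)) (Real.exp (-2*s)), hee s, one_mul]
    have hxv0 : x₀ s = Real.exp (2*s) * v0 s := by
      simp only [hv0_def]
      rw [← mul_assoc, mul_comm (Real.exp (2*s)) (Real.exp (-2*s)), hee s, one_mul]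
    have hRz : Rfun 0 (u0 s) = u0 s := Rfun_zero _
    have hFd2 : Fd s = Real.exp (2*s) * (u0 s * v0 s - Rfun η (uη s) * vη s) := by
      simp only [hFd_def, hRz, hxv, hxv0]
      ring
    rw [hFd2, abs_mul, Real.abs_exp]
    apply mul_le_mul_of_nonneg_left _ (Real.exp_pos _).le
    -- |u0 v0 - R1 vη| ≤ B + f s
    have hδ0 : 0 ≤ uη s - Rfun η (uη s) := sub_nonneg.2 (Rfun_le hη.le (huηnn s hs))
    have hδ : uη s - Rfun η (uη s) ≤ η * ρ₀ ^ ((2:ℝ)/3) * ρ₀ :=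
      Rfun_defect hη.le (huηnn s hs) hρ₀.le (huηle s hs)
    have hdecomp : u0 s * v0 s - Rfun η (uη s) * vη s =
        (uη s - Rfun η (uη s)) * vη s - vη s * U s - u0 s * V s := by
      simp only [hU_def, hV_def]; ring
    rw [hdecomp]
    have hA1 : 0 ≤ (uη s - Rfun η (uη s)) * vη s := mul_nonneg hδ0 (hvηnn s hs)
    have hA1' : (uη s - Rfun η (uη s)) * vη s ≤ B := by
      rw [hB_def]
      calc (uη s - Rfun η (uη s)) * vη s ≤ (η * ρ₀ ^ ((2:ℝ)/3) * ρ₀) * (ρ₀/3) := by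
            apply mul_le_mul hδ (hvηle s hs) (hvηnn s hs)
            positivity
        _ = η * ρ₀ ^ ((2:ℝ)/3) * ρ₀ ^ 2 / 3 := by ring
    have hA2 : |vη s * U s| ≤ ρ₀ / 3 * |U s| := by
      rw [abs_mul, abs_of_nonneg (hvηnn s hs)]
      exact mul_le_mul_of_nonneg_right (hvηle s hs) (abs_nonneg _)
    have hA3 : |u0 s * V s| ≤ ρ₀ * |V s| := by
      rw [abs_mul, abs_of_nonneg (hu0nn s hs)]
      exact mul_le_mul_of_nonneg_right (hu0le s hs) (abs_nonneg _)
    rw [abs_le]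
    simp only [hf_def]
    constructor
    · linarith [neg_abs_le (vη s * U s), neg_abs_le (u0 s * V s),
        le_abs_self (vη s * U s), le_abs_self (u0 s * V s)]
    · linarith [neg_abs_le (vη s * U s), neg_abs_le (u0 s * V s),
        le_abs_self (vη s * U s), le_abs_self (u0 s * V s)]
  -- the integral J
  set gJ : ℝ → ℝ := fun s => Real.exp (2*s) * f s with hgJ_def
  have hgJcont : ContinuousOn gJ (Iic 0) :=
    (Real.continuous_exp.comp (continuous_const.mul continuous_id)).continuousOn.mul hfcont
  have hgJnn : ∀ s ≤ (0:ℝ), 0 ≤ gJ s := by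
    intro s hs; simp only [hgJ_def]
    exact mul_nonneg (Real.exp_pos _).le (hfnn s hs)
  have hgJbd : ∀ s ≤ (0:ℝ), gJ s ≤ 2/3 * ρ₀ ^ 2 * Real.exp (2*s) := by
    intro s hs; simp only [hgJ_def]
    nlinarith [hfbd s hs, Real.exp_pos (2*s), hfnn s hs]
  have hgJint : IntegrableOn gJ (Iic 0) := by
    apply Integrable.mono' (((integrableOn_exp_mul_Iic two_pos 0)).const_mul (2/3 * ρ₀ ^ 2))
      (hgJcont.aestronglyMeasurable measurableSet_Iic)
    rw [ae_restrict_iff' measurableSet_Iic]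
    refine Filter.Eventually.of_forall (fun s hs => ?_)
    rw [Real.norm_eq_abs, abs_of_nonneg (hgJnn s hs)]
    exact hgJbd s hs
  set J : ℝ → ℝ := fun t => ∫ s in Iic t, gJ s with hJ_def
  have hJnn : ∀ t ≤ (0:ℝ), 0 ≤ J t := fun t ht => integral_Iic_nonneg hgJnn ht
  have hJmono : ∀ a b : ℝ, a ≤ b → b ≤ 0 → J a ≤ J b :=
    fun a b hab hb => integral_Iic_mono_set hgJint hgJnn hab hb
  have hJder : ∀ t ≤ (0:ℝ), HasDerivWithinAt J (gJ t) (Iic 0) t :=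
    fun t ht => hasDerivWithinAt_integral_Iic hgJcont hgJint ht
  have hJcont : ContinuousOn J (Iic 0) := fun t ht => (hJder t ht).continuousWithinAt
  have hJbd : ∀ t ≤ (0:ℝ), J t ≤ 2/3 * ρ₀ ^ 2 * (Real.exp (2*t) / 2) := by
    intro t ht
    have h1 : J t ≤ ∫ s in Iic t, 2/3 * ρ₀ ^ 2 * Real.exp (2*s) := by
      apply setIntegral_mono_on (hgJint.mono_set (Iic_subset_Iic.2 ht))
        (((integrableOn_exp_mul_Iic two_pos t)).const_mul (2/3 * ρ₀ ^ 2)) measurableSet_Iic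
      exact fun s hs => hgJbd s (le_trans hs ht)
    rw [MeasureTheory.integral_const_mul, integral_exp_mul_Iic two_pos] at h1
    exact h1
  have hJlim : Filter.Tendsto J atBot (nhds 0) := by
    apply tendsto_of_tendsto_of_tendsto_of_le_of_le' (g := fun _ => (0:ℝ))
      (h := fun t => 2/3 * ρ₀ ^ 2 * (Real.exp (2*t) / 2)) tendsto_const_nhds
    · have := ((tendsto_exp_mul_atBot two_pos).div_const 2).const_mul (2/3 * ρ₀ ^ 2)
      simpa using this
    · filter_upwards [eventually_le_atBot (0:ℝ)] with t ht
      exact hJnn t ht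
    · filter_upwards [eventually_le_atBot (0:ℝ)] with t ht
      exact hJbd t ht
  -- the comparison function G
  set G : ℝ → ℝ := fun t => B/2 * Real.exp (2*t) + J t with hG_def
  have hGnn : ∀ t ≤ (0:ℝ), 0 ≤ G t := by
    intro t ht
    have := hJnn t ht
    have := (Real.exp_pos (2*t)).le
    simp only [hG_def]
    positivity
  have hGder : ∀ t ≤ (0:ℝ), HasDerivWithinAt G (B * Real.exp (2*t) + gJ t) (Iic 0) t := by
    intro t ht
    have h1 := (((hasDerivAt_exp_mul 2 t).const_mul (B/2)).hasDerivWithinAt (s := Iic 0)).add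
      (hJder t ht)
    refine h1.congr_deriv ?_
    ring
  have hGcont : ContinuousOn G (Iic 0) := fun t ht => (hGder t ht).continuousWithinAt
  set MG : ℝ := B/2 + J 0 with hMG_def
  have hGbdM : ∀ s ≤ (0:ℝ), G s ≤ MG := by
    intro s hs
    have h1 : Real.exp (2*s) ≤ 1 := by
      rw [← Real.exp_zero]
      exact Real.exp_le_exp.2 (by linarith)
    have h2 : J s ≤ J 0 := hJmono s 0 hs le_rfl
    simp only [hG_def, hMG_def]
    nlinarith
  have hMGnn : 0 ≤ MG := le_trans (hGnn 0 le_rfl) (by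
    have := hGbdM 0 le_rfl; simpa [hG_def, hMG_def] using this)
  have hGlim : Filter.Tendsto G atBot (nhds 0) := by
    have h1 : Filter.Tendsto (fun t => B/2 * Real.exp (2*t)) atBot (nhds 0) := by
      simpa using (tendsto_exp_mul_atBot two_pos).const_mul (B/2)
    simpa using h1.add hJlim
  -- Step 1 : |U| ≤ G on Iic 0
  have hUlim0 : Filter.Tendsto U atBot (nhds 0) := by
    have h1 : Filter.Tendsto (fun s => uη s - u0 s) atBot (nhds (ρ - ρ)) := hyηlim.sub hy₀lim
    rw [sub_self] at h1
    exact h1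
  have hUG : ∀ t ≤ (0:ℝ), |U t| ≤ G t := by
    intro t ht
    have key : ∀ a, a ≤ t → |U t| ≤ |U a| + G t - G a := by
      intro a ha
      have hIcc : Icc a t ⊆ Iic 0 := fun x hx => le_trans hx.2 ht
      have happ := image_norm_le_of_norm_deriv_right_le_deriv_boundary'
        (f := U) (f' := Fd) (a := a) (b := t)
        (B := fun s => |U a| - G a + G s) (B' := fun s => B * Real.exp (2*s) + gJ s)
        (hUcont.mono hIcc)
        (fun x hx => (((hdU x (le_of_lt (lt_of_lt_of_le hx.2 ht))).hasDerivAt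
          (Iic_mem_nhds (lt_of_lt_of_le hx.2 ht))).hasDerivWithinAt))
        (by simp [Real.norm_eq_abs])
        (continuousOn_const.add (hGcont.mono hIcc))
        (fun x hx => ((((hGder x (le_of_lt (lt_of_lt_of_le hx.2 ht))).hasDerivAt
          (Iic_mem_nhds (lt_of_lt_of_le hx.2 ht))).const_add _).hasDerivWithinAt))
        (fun x hx => by
          rw [Real.norm_eq_abs]
          refine le_trans (hF x (le_of_lt (lt_of_lt_of_le hx.2 ht))) (le_of_eq ?_)
          simp only [hgJ_def]
          ring)
        (right_mem_Icc.2 ha)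
      have happ2 : |U t| ≤ |U a| - G a + G t := by simpa using happ
      linarith [happ2]
    have hUabslim : Filter.Tendsto (fun a => |U a| + G t - G a) atBot (nhds (|(0:ℝ)| + G t - 0)) :=
      ((hUlim0.abs.add_const _).sub hGlim)
    have := ge_of_tendsto hUabslim (by
      filter_upwards [eventually_le_atBot t] with a ha
      exact key a ha)
    simpa using this
  -- Step 2 : 3|V| ≤ G on Iic 0
  set gK : ℝ → ℝ := fun s => Real.exp (3*s) * G s with hgK_def
  have hgKcont : ContinuousOn gK (Iic 0) :=
    (Real.continuous_exp.comp (continuous_const.mul continuous_id)).continuousOn.mul hGcont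
  have hgKnn : ∀ s ≤ (0:ℝ), 0 ≤ gK s := by
    intro s hs; simp only [hgK_def]
    exact mul_nonneg (Real.exp_pos _).le (hGnn s hs)
  have hgKbd : ∀ s ≤ (0:ℝ), gK s ≤ MG * Real.exp (3*s) := by
    intro s hs; simp only [hgK_def]
    nlinarith [hGbdM s hs, Real.exp_pos (3*s), hGnn s hs]
  have hgKint : IntegrableOn gK (Iic 0) := by
    apply Integrable.mono' (((integrableOn_exp_mul_Iic three_pos 0)).const_mul MG)
      (hgKcont.aestronglyMeasurable measurableSet_Iic)
    rw [ae_restrict_iff' measurableSet_Iic]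
    refine Filter.Eventually.of_forall (fun s hs => ?_)
    rw [Real.norm_eq_abs, abs_of_nonneg (hgKnn s hs)]
    exact hgKbd s hs
  set K : ℝ → ℝ := fun t => ∫ s in Iic t, gK s with hK_def
  have hKnn : ∀ t ≤ (0:ℝ), 0 ≤ K t := fun t ht => integral_Iic_nonneg hgKnn ht
  have hKder : ∀ t ≤ (0:ℝ), HasDerivWithinAt K (gK t) (Iic 0) t :=
    fun t ht => hasDerivWithinAt_integral_Iic hgKcont hgKint ht
  have hKcont : ContinuousOn K (Iic 0) := fun t ht => (hKder t ht).continuousWithinAt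
  have hKbd : ∀ t ≤ (0:ℝ), K t ≤ MG * (Real.exp (3*t) / 3) := by
    intro t ht
    have h1 : K t ≤ ∫ s in Iic t, MG * Real.exp (3*s) := by
      apply setIntegral_mono_on (hgKint.mono_set (Iic_subset_Iic.2 ht))
        (((integrableOn_exp_mul_Iic three_pos t)).const_mul MG) measurableSet_Iic
      exact fun s hs => hgKbd s (le_trans hs ht)
    rw [MeasureTheory.integral_const_mul, integral_exp_mul_Iic three_pos] at h1
    exact h1
  have hKlim : Filter.Tendsto K atBot (nhds 0) := by
    apply tendsto_of_tendsto_of_tendsto_of_le_of_le' (g := fun _ => (0:ℝ))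
      (h := fun t => MG * (Real.exp (3*t) / 3)) tendsto_const_nhds
    · have := ((tendsto_exp_mul_atBot three_pos).div_const 3).const_mul MG
      simpa using this
    · filter_upwards [eventually_le_atBot (0:ℝ)] with t ht
      exact hKnn t ht
    · filter_upwards [eventually_le_atBot (0:ℝ)] with t ht
      exact hKbd t ht
  -- tilde V
  set Vt : ℝ → ℝ := fun s => Real.exp (3*s) * V s with hVt_def
  have hdVt : ∀ s ≤ (0:ℝ), HasDerivWithinAt Vt (Real.exp (3*s) * U s) (Iic 0) s := by
    intro s hs
    have h1 := ((hasDerivAt_exp_mul 3 s).hasDerivWithinAt (s := Iic 0)).mul (hdV s hs)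
    simp only [hVt_def]
    refine h1.congr_deriv ?_
    ring
  have hVtcont : ContinuousOn Vt (Iic 0) := fun s hs => (hdVt s hs).continuousWithinAt
  have hVtlim : Filter.Tendsto Vt atBot (nhds 0) := by
    have hVlim0 : Filter.Tendsto V atBot (nhds 0) := by
      have h1 : Filter.Tendsto (fun s => vη s - v0 s) atBot (nhds (ρ/3 - ρ/3)) :=
        hxηlim.sub hx₀lim
      rw [sub_self] at h1
      exact h1
    have := (tendsto_exp_mul_atBot three_pos).mul hVlim0
    simpa [hVt_def] using this
  have hVtK : ∀ t ≤ (0:ℝ), |Vt t| ≤ K t := by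
    intro t ht
    have key : ∀ a, a ≤ t → |Vt t| ≤ |Vt a| + K t - K a := by
      intro a ha
      have hIcc : Icc a t ⊆ Iic 0 := fun x hx => le_trans hx.2 ht
      have happ := image_norm_le_of_norm_deriv_right_le_deriv_boundary'
        (f := Vt) (f' := fun s => Real.exp (3*s) * U s) (a := a) (b := t)
        (B := fun s => |Vt a| - K a + K s) (B' := gK)
        (hVtcont.mono hIcc)
        (fun x hx => (((hdVt x (le_of_lt (lt_of_lt_of_le hx.2 ht))).hasDerivAt
          (Iic_mem_nhds (lt_of_lt_of_le hx.2 ht))).hasDerivWithinAt))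
        (by simp [Real.norm_eq_abs])
        (continuousOn_const.add (hKcont.mono hIcc))
        (fun x hx => ((((hKder x (le_of_lt (lt_of_lt_of_le hx.2 ht))).hasDerivAt
          (Iic_mem_nhds (lt_of_lt_of_le hx.2 ht))).const_add _).hasDerivWithinAt))
        (fun x hx => by
          have hx0 : x ≤ (0:ℝ) := le_of_lt (lt_of_lt_of_le hx.2 ht)
          rw [Real.norm_eq_abs, abs_mul, Real.abs_exp]
          simp only [hgK_def]
          exact mul_le_mul_of_nonneg_left (hUG x hx0) (Real.exp_pos _).le)
        (right_mem_Icc.2 ha)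
      have happ2 : |Vt t| ≤ |Vt a| - K a + K t := by simpa using happ
      linarith [happ2]
    have hlim2 : Filter.Tendsto (fun a => |Vt a| + K t - K a) atBot (nhds (|(0:ℝ)| + K t - 0)) :=
      ((hVtlim.abs.add_const _).sub hKlim)
    have := ge_of_tendsto hlim2 (by
      filter_upwards [eventually_le_atBot t] with a ha
      exact key a ha)
    simpa using this
  -- bound K from above
  have hKle : ∀ t ≤ (0:ℝ), K t ≤ B/10 * Real.exp (5*t) + J t * (Real.exp (3*t) / 3) := by
    intro t ht
    have hptwise : ∀ s ∈ Iic t, gK s ≤ B/2 * Real.exp (5*s) + J t * Real.exp (3*s) := by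
      intro s hs
      have hs0 : s ≤ (0:ℝ) := le_trans hs ht
      have h53 : Real.exp (3*s) * Real.exp (2*s) = Real.exp (5*s) := by
        rw [← Real.exp_add]; ring_nf
      have hJs : J s ≤ J t := hJmono s t hs ht
      have hexp3 := (Real.exp_pos (3*s)).le
      simp only [hgK_def, hG_def]
      calc Real.exp (3*s) * (B/2 * Real.exp (2*s) + J s)
          = B/2 * (Real.exp (3*s) * Real.exp (2*s)) + Real.exp (3*s) * J s := by ring
        _ = B/2 * Real.exp (5*s) + Real.exp (3*s) * J s := by rw [h53]
        _ ≤ B/2 * Real.exp (5*s) + Real.exp (3*s) * J t := by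
            have := mul_le_mul_of_nonneg_left hJs hexp3
            linarith
        _ = B/2 * Real.exp (5*s) + J t * Real.exp (3*s) := by ring
    have hi5 : IntegrableOn (fun s : ℝ => B/2 * Real.exp (5*s)) (Iic t) :=
      (integrableOn_exp_mul_Iic (by norm_num : (0:ℝ) < 5) t).const_mul (B/2)
    have hi3 : IntegrableOn (fun s : ℝ => J t * Real.exp (3*s)) (Iic t) :=
      (integrableOn_exp_mul_Iic three_pos t).const_mul (J t)
    have h1 : K t ≤ ∫ s in Iic t, (B/2 * Real.exp (5*s) + J t * Real.exp (3*s)) :=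
      setIntegral_mono_on (hgKint.mono_set (Iic_subset_Iic.2 ht)) (hi5.add hi3)
        measurableSet_Iic hptwise
    rw [MeasureTheory.integral_add hi5 hi3,
      MeasureTheory.integral_const_mul, MeasureTheory.integral_const_mul,
      integral_exp_mul_Iic (by norm_num : (0:ℝ) < 5), integral_exp_mul_Iic three_pos] at h1
    calc K t ≤ B/2 * (Real.exp (5*t)/5) + J t * (Real.exp (3*t)/3) := h1
      _ = B/10 * Real.exp (5*t) + J t * (Real.exp (3*t)/3) := by ring
  have hVG : ∀ t ≤ (0:ℝ), 3 * |V t| ≤ G t := by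
    intro t ht
    have h1 : Real.exp (3*t) * |V t| ≤ B/10 * Real.exp (5*t) + J t * (Real.exp (3*t)/3) := by
      have := le_trans (hVtK t ht) (hKle t ht)
      rw [hVt_def] at this
      calc Real.exp (3*t) * |V t| = |Real.exp (3*t) * V t| := by
            rw [abs_mul, Real.abs_exp]
        _ ≤ _ := this
    have h53 : Real.exp (5*t) = Real.exp (3*t) * Real.exp (2*t) := by
      rw [← Real.exp_add]; ring_nf
    rw [h53] at h1
    have h2 : Real.exp (3*t) * (3 * |V t|) ≤ Real.exp (3*t) * (3 * (B/10 * Real.exp (2*t) + J t / 3)) := by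
      nlinarith [Real.exp_pos (3*t)]
    have h3 : 3 * |V t| ≤ 3 * (B/10 * Real.exp (2*t) + J t / 3) :=
      le_of_mul_le_mul_left h2 (Real.exp_pos (3*t))
    have h4 : Real.exp (2*t) ≥ 0 := (Real.exp_pos _).le
    simp only [hG_def]
    nlinarith
  -- Step 3 : Gronwall
  set gW : ℝ → ℝ := fun s => 2*ρ₀/3 * (Real.exp (2*s) * G s) with hgW_def
  have hgWcont : ContinuousOn gW (Iic 0) :=
    continuousOn_const.mul
      ((Real.continuous_exp.comp (continuous_const.mul continuous_id)).continuousOn.mul hGcont)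
  have hgWnn : ∀ s ≤ (0:ℝ), 0 ≤ gW s := by
    intro s hs; simp only [hgW_def]
    have := hGnn s hs
    have := (Real.exp_pos (2*s)).le
    positivity
  have hgWbd : ∀ s ≤ (0:ℝ), gW s ≤ 2*ρ₀/3 * MG * Real.exp (2*s) := by
    intro s hs; simp only [hgW_def]
    have h1 := mul_le_mul_of_nonneg_left (hGbdM s hs) (Real.exp_pos (2*s)).le
    have h2 := mul_le_mul_of_nonneg_left h1 (show (0:ℝ) ≤ 2*ρ₀/3 by positivity)
    nlinarith [h2]
  have hgWint : IntegrableOn gW (Iic 0) := by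
    apply Integrable.mono' (((integrableOn_exp_mul_Iic two_pos 0)).const_mul (2*ρ₀/3 * MG))
      (hgWcont.aestronglyMeasurable measurableSet_Iic)
    rw [ae_restrict_iff' measurableSet_Iic]
    refine Filter.Eventually.of_forall (fun s hs => ?_)
    rw [Real.norm_eq_abs, abs_of_nonneg (hgWnn s hs)]
    exact hgWbd s hs
  set W : ℝ → ℝ := fun t => ∫ s in Iic t, gW s with hW_def
  have hWnn : ∀ t ≤ (0:ℝ), 0 ≤ W t := fun t ht => integral_Iic_nonneg hgWnn ht
  have hWder : ∀ t ≤ (0:ℝ), HasDerivWithinAt W (gW t) (Iic 0) t :=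
    fun t ht => hasDerivWithinAt_integral_Iic hgWcont hgWint ht
  have hWbd : ∀ t ≤ (0:ℝ), W t ≤ 2*ρ₀/3 * MG * (Real.exp (2*t) / 2) := by
    intro t ht
    have h1 : W t ≤ ∫ s in Iic t, 2*ρ₀/3 * MG * Real.exp (2*s) := by
      apply setIntegral_mono_on (hgWint.mono_set (Iic_subset_Iic.2 ht))
        (((integrableOn_exp_mul_Iic two_pos t)).const_mul (2*ρ₀/3 * MG)) measurableSet_Iic
      exact fun s hs => hgWbd s (le_trans hs ht)
    rw [MeasureTheory.integral_const_mul, integral_exp_mul_Iic two_pos] at h1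
    exact h1
  have hWlim : Filter.Tendsto W atBot (nhds 0) := by
    apply tendsto_of_tendsto_of_tendsto_of_le_of_le' (g := fun _ => (0:ℝ))
      (h := fun t => 2*ρ₀/3 * MG * (Real.exp (2*t) / 2)) tendsto_const_nhds
    · have := ((tendsto_exp_mul_atBot two_pos).div_const 2).const_mul (2*ρ₀/3 * MG)
      simpa using this
    · filter_upwards [eventually_le_atBot (0:ℝ)] with t ht
      exact hWnn t ht
    · filter_upwards [eventually_le_atBot (0:ℝ)] with t ht
      exact hWbd t ht
  have hJW : ∀ t ≤ (0:ℝ), J t ≤ W t := by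
    intro t ht
    apply setIntegral_mono_on (hgJint.mono_set (Iic_subset_Iic.2 ht))
      (hgWint.mono_set (Iic_subset_Iic.2 ht)) measurableSet_Iic
    intro s hs
    have hs0 : s ≤ (0:ℝ) := le_trans hs ht
    have h1 := hUG s hs0
    have h2 := hVG s hs0
    simp only [hgJ_def, hgW_def, hf_def]
    have h3 : ρ₀/3 * |U s| + ρ₀ * |V s| ≤ 2*ρ₀/3 * G s := by
      have h4 := mul_le_mul_of_nonneg_left h1 (show (0:ℝ) ≤ ρ₀/3 by positivity)
      have h5 := mul_le_mul_of_nonneg_left h2 (show (0:ℝ) ≤ ρ₀/3 by positivity)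
      nlinarith [h4, h5]
    have h6 := mul_le_mul_of_nonneg_left h3 (Real.exp_pos (2*s)).le
    nlinarith [h6]
  set Db : ℝ → ℝ := fun t => B/2 * Real.exp (2*t) + W t with hDb_def
  have hGD : ∀ t ≤ (0:ℝ), G t ≤ Db t := by
    intro t ht
    simp only [hG_def, hDb_def]
    linarith [hJW t ht]
  have hDbnn : ∀ t ≤ (0:ℝ), 0 ≤ Db t := fun t ht => le_trans (hGnn t ht) (hGD t ht)
  have hDbder : ∀ t ≤ (0:ℝ), HasDerivWithinAt Db (B * Real.exp (2*t) + gW t) (Iic 0) t := by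
    intro t ht
    have h1 := (((hasDerivAt_exp_mul 2 t).const_mul (B/2)).hasDerivWithinAt (s := Iic 0)).add
      (hWder t ht)
    refine h1.congr_deriv ?_
    ring
  have hDblim : Filter.Tendsto Db atBot (nhds 0) := by
    have h1 : Filter.Tendsto (fun t => B/2 * Real.exp (2*t)) atBot (nhds 0) := by
      simpa using (tendsto_exp_mul_atBot two_pos).const_mul (B/2)
    simpa using h1.add hWlim
  -- the weighted function Θ and ψ
  set o : ℝ → ℝ := fun t => Real.exp (-(ρ₀/3 * Real.exp (2*t))) with ho_def
  have hoder : ∀ t : ℝ, HasDerivAt o (o t * (-(ρ₀/3 * (2 * Real.exp (2*t))))) t := by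
    intro t
    have hinner : HasDerivAt (fun t : ℝ => -(ρ₀/3 * Real.exp (2*t)))
        (-(ρ₀/3 * (2 * Real.exp (2*t)))) t := by
      exact ((hasDerivAt_exp_mul 2 t).const_mul (ρ₀/3)).neg
    have := hinner.exp
    simpa [ho_def, mul_comm] using this
  have hopos : ∀ t : ℝ, 0 < o t := fun t => Real.exp_pos _
  have hole : ∀ t : ℝ, o t ≤ 1 := by
    intro t
    simp only [ho_def]
    rw [← Real.exp_zero]
    apply Real.exp_le_exp.2
    have := (Real.exp_pos (2*t)).le
    nlinarith [hρ₀.le]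
  set ψ : ℝ → ℝ := fun t => B/2 * Real.exp (2*t) - o t * Db t with hψ_def
  have hψder : ∀ t ≤ (0:ℝ), HasDerivWithinAt ψ
      (B * Real.exp (2*t) - (o t * (-(ρ₀/3 * (2 * Real.exp (2*t)))) * Db t
        + o t * (B * Real.exp (2*t) + gW t))) (Iic 0) t := by
    intro t ht
    have hΘ := ((hoder t).hasDerivWithinAt (s := Iic 0)).mul (hDbder t ht)
    have hβ := ((hasDerivAt_exp_mul 2 t).const_mul (B/2)).hasDerivWithinAt (s := Iic 0)
    have := hβ.sub hΘ
    refine this.congr_deriv ?_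
    ring
  have hψpos : ∀ t ≤ (0:ℝ), 0 ≤ B * Real.exp (2*t) - (o t * (-(ρ₀/3 * (2 * Real.exp (2*t)))) * Db t
      + o t * (B * Real.exp (2*t) + gW t)) := by
    intro t ht
    have hbr : o t * (-(ρ₀/3 * (2 * Real.exp (2*t)))) * Db t + o t * (B * Real.exp (2*t) + gW t)
        = o t * (B * Real.exp (2*t) + gW t - 2*ρ₀/3 * Real.exp (2*t) * Db t) := by ring
    rw [hbr]
    have hgWle : gW t ≤ 2*ρ₀/3 * Real.exp (2*t) * Db t := by
      simp only [hgW_def]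
      have h1 := hGD t ht
      have h2 := (Real.exp_pos (2*t)).le
      have h3 := mul_le_mul_of_nonneg_left h1 h2
      have h4 := mul_le_mul_of_nonneg_left h3 (show (0:ℝ) ≤ 2*ρ₀/3 by positivity)
      nlinarith [h4]
    set r : ℝ := B * Real.exp (2*t) + gW t - 2*ρ₀/3 * Real.exp (2*t) * Db t with hr_def
    have hrle : r ≤ B * Real.exp (2*t) := by simp only [hr_def]; linarith
    rcases le_or_gt r 0 with hr0 | hr0
    · have : o t * r ≤ 0 := mul_nonpos_iff.2 (Or.inl ⟨(hopos t).le, hr0⟩)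
      have hB2 : 0 ≤ B * Real.exp (2*t) := mul_nonneg hBnn (Real.exp_pos _).le
      linarith
    · have : o t * r ≤ 1 * r := mul_le_mul_of_nonneg_right (hole t) hr0.le
      rw [one_mul] at this
      linarith
  have hψlim : Filter.Tendsto ψ atBot (nhds 0) := by
    have h1 : Filter.Tendsto (fun t => B/2 * Real.exp (2*t)) atBot (nhds 0) := by
      simpa using (tendsto_exp_mul_atBot two_pos).const_mul (B/2)
    have h2 : Filter.Tendsto o atBot (nhds 1) := by
      have hinner : Filter.Tendsto (fun t => -(ρ₀/3 * Real.exp (2*t))) atBot (nhds 0) := by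
        simpa using ((tendsto_exp_mul_atBot two_pos).const_mul (ρ₀/3)).neg
      have := (Real.continuous_exp.tendsto 0).comp hinner
      simpa [ho_def, Real.exp_zero, Function.comp_def] using this
    have h3 : Filter.Tendsto (fun t => o t * Db t) atBot (nhds 0) := by
      have := h2.mul hDblim
      simpa using this
    simpa [hψ_def] using h1.sub h3
  have hψnn : ∀ t ≤ (0:ℝ), 0 ≤ ψ t := nonneg_of_deriv_limit hψder hψpos hψlim
  -- conclude : G t ≤ B/2 * exp(ρ₀/3)
  have hGfin : ∀ t ≤ (0:ℝ), G t ≤ B/2 * Real.exp (ρ₀/3) := by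
    intro t ht
    have h1 : o t * Db t ≤ B/2 * Real.exp (2*t) := by
      have := hψnn t ht
      simp only [hψ_def] at this
      linarith
    have hexple : Real.exp (2*t) ≤ 1 := by
      rw [← Real.exp_zero]
      exact Real.exp_le_exp.2 (by linarith)
    have h2 : o t * Db t ≤ B/2 := by
      nlinarith [mul_nonneg hBnn (Real.exp_pos (2*t)).le]
    have h3 : Db t ≤ B/2 / o t := by
      rw [le_div_iff₀ (hopos t)]
      calc Db t * o t = o t * Db t := by ring
        _ ≤ B/2 := h2
    have h4 : B/2 / o t = B/2 * Real.exp (ρ₀/3 * Real.exp (2*t)) := by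
      simp only [ho_def]
      rw [Real.exp_neg]
      field_simp
    have h5 : Real.exp (ρ₀/3 * Real.exp (2*t)) ≤ Real.exp (ρ₀/3) := by
      apply Real.exp_le_exp.2
      nlinarith [Real.exp_pos (2*t)]
    have h6 : Db t ≤ B/2 * Real.exp (ρ₀/3) := by
      rw [h4] at h3
      nlinarith [hBnn]
    exact le_trans (hGD t ht) h6
  -- final conclusion
  intro t ht
  have hsplit : ρ₀ ^ ((8:ℝ)/3) = ρ₀ ^ ((2:ℝ)/3) * ρ₀ ^ 2 := by
    rw [← Real.rpow_natCast ρ₀ 2, ← Real.rpow_add hρ₀]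
    norm_num
  have hBval : B/2 = η/6 * ρ₀ ^ ((8:ℝ)/3) := by
    rw [hB_def, hsplit]; ring
  have hUt : Real.exp (-2*t) * |yη t - y₀ t| = |U t| := by
    simp only [hU_def, huη_def, hu0_def]
    rw [← mul_sub, abs_mul, Real.abs_exp]
  have hVt2 : Real.exp (-2*t) * |xη t - x₀ t| = |V t| := by
    simp only [hV_def, hvη_def, hv0_def]
    rw [← mul_sub, abs_mul, Real.abs_exp]
  constructor
  · rw [hUt]
    calc |U t| ≤ G t := hUG t ht
      _ ≤ B/2 * Real.exp (ρ₀/3) := hGfin t ht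
      _ = η/6 * ρ₀ ^ ((8:ℝ)/3) * Real.exp (ρ₀/3) := by rw [hBval]
  · rw [hVt2]
    have h1 : 3 * |V t| ≤ B/2 * Real.exp (ρ₀/3) := le_trans (hVG t ht) (hGfin t ht)
    have h2 : |V t| ≤ B/6 * Real.exp (ρ₀/3) := by linarith
    calc |V t| ≤ B/6 * Real.exp (ρ₀/3) := h2
      _ = η/18 * ρ₀ ^ ((8:ℝ)/3) * Real.exp (ρ₀/3) := by
        rw [hsplit, hB_def]; ring
end

section
/- There exists a constant C > 0 such that for every η > 0 and μ > 0 with μ² η³ = 8/3, the function R(z) = (μ/4) f_{−1/2}(f_{1/2}^{−1}(2z/μ)) satisfies 0 ≤ z − R(z) ≤ C η z^{5/3} for all z > 0. Equivalently, the function w ↦ [w − (1/√6) f_{−1/2}(f_{1/2}^{−1}((√6/2) w))] / w^{5/3} is nonnegative and bounded on (0,∞). -/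
open Real Filter Set

section FDaux
open MeasureTheory Topology

noncomputable def gg (t x : ℝ) : ℝ := (1 + Real.exp (x - t))⁻¹
noncomputable def ww (t x : ℝ) : ℝ := Real.exp (x - t) / (1 + Real.exp (x - t)) ^ 2

lemma one_add_exp_pos (t x : ℝ) : 0 < 1 + Real.exp (x - t) := by positivity

lemma gg_pos (t x : ℝ) : 0 < gg t x := inv_pos.2 (one_add_exp_pos t x)

lemma ww_pos (t x : ℝ) : 0 < ww t x := div_pos (exp_pos _) (by positivity)

lemma gg_le_exp (t x : ℝ) : gg t x ≤ Real.exp (t - x) := by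
  have h : Real.exp (t - x) = (Real.exp (x - t))⁻¹ := by
    rw [← Real.exp_neg]; ring_nf
  rw [gg, h]
  exact inv_anti₀ (exp_pos _) (by linarith [exp_pos (x - t)])

lemma ww_le_exp (t x : ℝ) : ww t x ≤ Real.exp (t - x) := by
  have h : Real.exp (t - x) = (Real.exp (x - t))⁻¹ := by
    rw [← Real.exp_neg]; ring_nf
  rw [ww, h, div_le_iff₀ (by positivity), inv_mul_eq_div, le_div_iff₀ (exp_pos _)]
  nlinarith [exp_pos (x - t)]

lemma ww_le_gg (t x : ℝ) : ww t x ≤ gg t x := by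
  rw [ww, gg, div_le_iff₀ (by positivity), inv_mul_eq_div, le_div_iff₀ (one_add_exp_pos t x)]
  nlinarith [exp_pos (x - t)]

lemma gg_anti (t : ℝ) {x y : ℝ} (h : x ≤ y) : gg t y ≤ gg t x :=
  inv_anti₀ (one_add_exp_pos t x) (by have := exp_le_exp.2 (show x - t ≤ y - t by linarith); linarith)

lemma gg_ge (t : ℝ) {x : ℝ} (hx : 0 ≤ x) :
    (Real.exp t - Real.exp (2*t)) * Real.exp (-x) ≤ gg t x := by
  rw [gg, inv_eq_one_div, le_div_iff₀ (one_add_exp_pos t x)]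
  have hB : Real.exp (-x) ≤ 1 := exp_le_one_iff.2 (by linarith)
  have hu : Real.exp (x - t) * (Real.exp t * Real.exp (-x)) = 1 := by
    rw [← Real.exp_add, ← Real.exp_add, show x - t + (t + -x) = 0 by ring, Real.exp_zero]
  have h2t : Real.exp (2*t) = Real.exp t * Real.exp t := by
    rw [← Real.exp_add]; ring_nf
  nlinarith [exp_pos t, exp_pos (-x), exp_pos (x - t), mul_pos (exp_pos t) (exp_pos (-x))]

lemma gg_cont (t : ℝ) : Continuous (gg t) := by
  apply Continuous.inv₀
  · exact continuous_const.add ((continuous_id.sub continuous_const).rexp)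
  · intro x; exact ne_of_gt (one_add_exp_pos t x)

lemma ww_cont (t : ℝ) : Continuous (ww t) := by
  apply Continuous.div
  · exact (continuous_id.sub continuous_const).rexp
  · exact (continuous_const.add ((continuous_id.sub continuous_const).rexp)).pow 2
  · intro x; positivity

lemma int_exp_aux {q : ℝ} (hq : -1 < q) (c : ℝ) :
    IntegrableOn (fun x : ℝ => Real.exp c * (Real.exp (-x) * x ^ q)) (Ioi (0:ℝ)) := by
  have h := (Real.GammaIntegral_convergent (show 0 < q + 1 by linarith)).const_mul (Real.exp c)
  simpa [IntegrableOn] using h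

lemma int_rpow_exp {q : ℝ} (hq : -1 < q) (c : ℝ) :
    IntegrableOn (fun x : ℝ => x ^ q * Real.exp (c - x)) (Ioi (0:ℝ)) := by
  have h := int_exp_aux hq c
  refine h.congr_fun (fun x _ => ?_) measurableSet_Ioi
  beta_reduce
  rw [Real.exp_sub, Real.exp_neg]
  field_simp

lemma integral_rpow_exp {q : ℝ} (hq : -1 < q) (c : ℝ) :
    ∫ x in Ioi (0:ℝ), x ^ q * Real.exp (c - x) = Real.exp c * Real.Gamma (q + 1) := by
  rw [Real.Gamma_eq_integral (show 0 < q + 1 by linarith), ← MeasureTheory.integral_const_mul]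
  refine setIntegral_congr_fun measurableSet_Ioi (fun x _ => ?_)
  rw [show q + 1 - 1 = q by ring, Real.exp_sub, Real.exp_neg]
  field_simp

lemma int_of_bounded {q t : ℝ} (hq : -1 < q) {h : ℝ → ℝ} (hc : Continuous h)
    (hb : ∀ x : ℝ, |h x| ≤ Real.exp (t - x)) :
    IntegrableOn (fun x : ℝ => x ^ q * h x) (Ioi (0:ℝ)) := by
  refine Integrable.mono' (int_rpow_exp hq t) ?_ ?_
  · refine ContinuousOn.aestronglyMeasurable ?_ measurableSet_Ioi
    exact ContinuousOn.mul (fun x hx => ((Real.continuousAt_rpow_const x q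
      (Or.inl (ne_of_gt hx))).continuousWithinAt)) hc.continuousOn
  · filter_upwards [ae_restrict_mem measurableSet_Ioi] with x hx
    have hx0 : (0:ℝ) < x := hx
    rw [Real.norm_eq_abs, abs_mul, abs_of_nonneg (Real.rpow_nonneg hx0.le q)]
    exact mul_le_mul_of_nonneg_left (hb x) (Real.rpow_nonneg hx0.le q)

lemma int_gg {q : ℝ} (hq : -1 < q) (t : ℝ) :
    IntegrableOn (fun x : ℝ => x ^ q * gg t x) (Ioi (0:ℝ)) :=
  int_of_bounded hq (gg_cont t) (fun x => by
    rw [abs_of_pos (gg_pos t x)]; exact gg_le_exp t x)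

lemma int_ww {q : ℝ} (hq : -1 < q) (t : ℝ) :
    IntegrableOn (fun x : ℝ => x ^ q * ww t x) (Ioi (0:ℝ)) :=
  int_of_bounded hq (ww_cont t) (fun x => by
    rw [abs_of_pos (ww_pos t x)]; exact ww_le_exp t x)

lemma phi_deriv (t : ℝ) {x : ℝ} (hx : 0 < x) :
    HasDerivAt (fun y : ℝ => 2 * y ^ ((1/2):ℝ) * gg t y)
      (x ^ (-(1/2):ℝ) * gg t x - 2 * x ^ ((1/2):ℝ) * ww t x) x := by
  have h1 : HasDerivAt (fun y : ℝ => y ^ ((1/2):ℝ)) ((1/2) * x ^ ((1/2:ℝ) - 1)) x :=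
    Real.hasDerivAt_rpow_const (Or.inl hx.ne')
  have h2 : HasDerivAt (fun y : ℝ => 1 + Real.exp (y - t)) (Real.exp (x - t)) x := by
    simpa using (((hasDerivAt_id x).sub_const t).exp).const_add 1
  have h3 : HasDerivAt (fun y : ℝ => gg t y)
      (-Real.exp (x - t) / (1 + Real.exp (x - t)) ^ 2) x :=
    h2.inv (ne_of_gt (one_add_exp_pos t x))
  have h4 := (h1.const_mul 2).mul h3
  refine h4.congr_deriv ?_
  rw [gg, ww, show ((1:ℝ)/2 - 1) = -(1/2) by norm_num]
  field_simp
  ring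

lemma phi_tendsto (t : ℝ) :
    Tendsto (fun y : ℝ => 2 * y ^ ((1/2):ℝ) * gg t y) atTop (𝓝 0) := by
  have hmaj : Tendsto (fun y : ℝ => 2 * Real.exp t * (y ^ ((1/2):ℝ) * Real.exp (-1 * y)))
      atTop (𝓝 (2 * Real.exp t * 0)) :=
    (tendsto_rpow_mul_exp_neg_mul_atTop_nhds_zero (1/2) 1 one_pos).const_mul _
  rw [mul_zero] at hmaj
  apply squeeze_zero_norm' _ hmaj
  filter_upwards [eventually_ge_atTop (0:ℝ)] with y hy
  rw [Real.norm_eq_abs, abs_of_nonneg (mul_nonneg (by positivity) (gg_pos t y).le)]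
  have h1 : gg t y ≤ Real.exp (t - y) := gg_le_exp t y
  have h2 : Real.exp (t - y) = Real.exp t * Real.exp (-1 * y) := by
    rw [← Real.exp_add]; ring_nf
  calc 2 * y ^ ((1/2):ℝ) * gg t y ≤ 2 * y ^ ((1/2):ℝ) * (Real.exp t * Real.exp (-1 * y)) := by
        rw [← h2]; exact mul_le_mul_of_nonneg_left h1 (by positivity)
    _ = 2 * Real.exp t * (y ^ ((1/2):ℝ) * Real.exp (-1 * y)) := by ring

lemma G_eq_w (t : ℝ) :
    ∫ x in Ioi (0:ℝ), x ^ (-(1/2):ℝ) * gg t x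
      = ∫ x in Ioi (0:ℝ), 2 * (x ^ ((1/2):ℝ) * ww t x) := by
  have hint1 := int_gg (show (-1:ℝ) < -(1/2) by norm_num) t
  have hint2 : Integrable (fun x : ℝ => 2 * (x ^ ((1/2):ℝ) * ww t x))
      (volume.restrict (Ioi 0)) :=
    (int_ww (show (-1:ℝ) < 1/2 by norm_num) t).const_mul 2
  have f'int : IntegrableOn
      (fun x : ℝ => x ^ (-(1/2):ℝ) * gg t x - 2 * x ^ ((1/2):ℝ) * ww t x) (Ioi 0) := by
    exact (hint1.sub hint2).congr (Filter.Eventually.of_forall fun x => by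
      simp only [Pi.sub_apply]; ring)
  have hcont : ContinuousWithinAt (fun y : ℝ => 2 * y ^ ((1/2):ℝ) * gg t y) (Ici 0) 0 := by
    apply ContinuousAt.continuousWithinAt
    exact ((Real.continuousAt_rpow_const 0 (1/2) (Or.inr (by norm_num))).const_smul
      (2:ℝ)).mul ((gg_cont t).continuousAt)
  have key := integral_Ioi_of_hasDerivAt_of_tendsto hcont
    (fun x hx => phi_deriv t hx) f'int (phi_tendsto t)
  rw [show (2:ℝ) * (0:ℝ) ^ ((1/2):ℝ) * gg t 0 = 0 by
    rw [Real.zero_rpow (by norm_num)]; ring] at key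
  rw [sub_zero] at key
  have hsub := MeasureTheory.integral_sub hint1 hint2
  have hzero : ∫ x in Ioi (0:ℝ),
      (x ^ (-(1/2):ℝ) * gg t x - 2 * (x ^ ((1/2):ℝ) * ww t x)) = 0 := by
    have hcg := setIntegral_congr_fun (μ := volume) (s := Ioi (0:ℝ))
      (f := fun x : ℝ => x ^ (-(1/2):ℝ) * gg t x - 2 * (x ^ ((1/2):ℝ) * ww t x))
      (g := fun x : ℝ => x ^ (-(1/2):ℝ) * gg t x - 2 * x ^ ((1/2):ℝ) * ww t x)
      measurableSet_Ioi (fun x _ => by ring)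
    rw [hcg, key]
  rw [hzero] at hsub
  linarith [hsub]

noncomputable def FF (t : ℝ) : ℝ := ∫ x in Ioi (0:ℝ), x ^ ((1/2):ℝ) * gg t x
noncomputable def GG (t : ℝ) : ℝ := ∫ x in Ioi (0:ℝ), x ^ (-(1/2):ℝ) * gg t x

lemma FF_nonneg (t : ℝ) : 0 ≤ FF t :=
  setIntegral_nonneg measurableSet_Ioi fun x hx =>
    mul_nonneg (Real.rpow_nonneg (le_of_lt hx) _) (gg_pos t x).le

lemma GG_nonneg (t : ℝ) : 0 ≤ GG t :=
  setIntegral_nonneg measurableSet_Ioi fun x hx =>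
    mul_nonneg (Real.rpow_nonneg (le_of_lt hx) _) (gg_pos t x).le

lemma GG_le_twoFF (t : ℝ) : GG t ≤ 2 * FF t := by
  rw [GG, G_eq_w t, FF, ← MeasureTheory.integral_const_mul]
  refine setIntegral_mono_on ((int_ww (by norm_num) t).const_mul 2)
    ((int_gg (by norm_num) t).const_mul 2) measurableSet_Ioi (fun x hx => ?_)
  have h := ww_le_gg t x
  have hx0 : (0:ℝ) ≤ x ^ ((1/2):ℝ) := Real.rpow_nonneg (le_of_lt hx) _
  nlinarith [mul_le_mul_of_nonneg_left h hx0]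

lemma FF_ge (t : ℝ) : 2/3 * gg t 1 ≤ FF t := by
  have step1 : ∫ x in Ioc (0:ℝ) 1, x ^ ((1/2):ℝ) * gg t x ≤ FF t := by
    refine setIntegral_mono_set (int_gg (by norm_num) t) ?_ ?_
    · filter_upwards [ae_restrict_mem measurableSet_Ioi] with x hx
      exact mul_nonneg (Real.rpow_nonneg (le_of_lt hx) _) (gg_pos t x).le
    · exact HasSubset.Subset.eventuallyLE Ioc_subset_Ioi_self
  have hint1 : IntegrableOn (fun x : ℝ => x ^ ((1/2):ℝ) * gg t 1) (Ioc (0:ℝ) 1) := by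
    have := (intervalIntegral.intervalIntegrable_rpow' (a := (0:ℝ)) (b := 1)
      (show (-1:ℝ) < 1/2 by norm_num)).mul_const (gg t 1)
    rwa [intervalIntegrable_iff_integrableOn_Ioc_of_le zero_le_one] at this
  have hint2 : IntegrableOn (fun x : ℝ => x ^ ((1/2):ℝ) * gg t x) (Ioc (0:ℝ) 1) :=
    (int_gg (by norm_num) t).mono_set Ioc_subset_Ioi_self
  have step2 : ∫ x in Ioc (0:ℝ) 1, x ^ ((1/2):ℝ) * gg t 1
      ≤ ∫ x in Ioc (0:ℝ) 1, x ^ ((1/2):ℝ) * gg t x := by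
    refine setIntegral_mono_on hint1 hint2 measurableSet_Ioc (fun x hx => ?_)
    exact mul_le_mul_of_nonneg_left (gg_anti t hx.2) (Real.rpow_nonneg hx.1.le _)
  have hval : ∫ x in Ioc (0:ℝ) 1, x ^ ((1/2):ℝ) * gg t 1 = 2/3 * gg t 1 := by
    rw [← intervalIntegral.integral_of_le zero_le_one,
      intervalIntegral.integral_mul_const, integral_rpow (Or.inl (by norm_num))]
    norm_num
  linarith

lemma Gamma_three_halves : Real.Gamma (3/2) = Real.sqrt π / 2 := by
  rw [show (3/2:ℝ) = 1/2 + 1 by norm_num, Real.Gamma_add_one (by norm_num),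
    Real.Gamma_one_half_eq]
  ring

lemma twoFF_le (t : ℝ) : 2 * FF t ≤ Real.sqrt π * Real.exp t := by
  have step : FF t ≤ ∫ x in Ioi (0:ℝ), x ^ ((1/2):ℝ) * Real.exp (t - x) := by
    refine setIntegral_mono_on (int_gg (by norm_num) t) (int_rpow_exp (by norm_num) t)
      measurableSet_Ioi (fun x hx => ?_)
    exact mul_le_mul_of_nonneg_left (gg_le_exp t x) (Real.rpow_nonneg (le_of_lt hx) _)
  rw [integral_rpow_exp (by norm_num) t, show (1/2:ℝ) + 1 = 3/2 by norm_num,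
    Gamma_three_halves] at step
  nlinarith [Real.sqrt_nonneg π, Real.exp_pos t]

lemma GG_ge (t : ℝ) : (Real.exp t - Real.exp (2*t)) * Real.sqrt π ≤ GG t := by
  have hint1 : IntegrableOn
      (fun x : ℝ => (Real.exp t - Real.exp (2*t)) * (x ^ (-(1/2):ℝ) * Real.exp (0 - x)))
      (Ioi (0:ℝ)) := (int_rpow_exp (by norm_num) 0).const_mul _
  have step : ∫ x in Ioi (0:ℝ),
      (Real.exp t - Real.exp (2*t)) * (x ^ (-(1/2):ℝ) * Real.exp (0 - x)) ≤ GG t := by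
    refine setIntegral_mono_on hint1 (int_gg (by norm_num) t) measurableSet_Ioi
      (fun x hx => ?_)
    have h := gg_ge t (le_of_lt hx)
    have hx0 : (0:ℝ) ≤ x ^ (-(1/2):ℝ) := Real.rpow_nonneg (le_of_lt hx) _
    calc (Real.exp t - Real.exp (2*t)) * (x ^ (-(1/2):ℝ) * Real.exp (0 - x))
        = x ^ (-(1/2):ℝ) * ((Real.exp t - Real.exp (2*t)) * Real.exp (-x)) := by
          rw [show (0:ℝ) - x = -x by ring]; ring
      _ ≤ x ^ (-(1/2):ℝ) * gg t x := mul_le_mul_of_nonneg_left h hx0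
  rw [MeasureTheory.integral_const_mul, integral_rpow_exp (by norm_num) 0,
    show (-(1/2):ℝ) + 1 = 1/2 by norm_num, Real.Gamma_one_half_eq, Real.exp_zero,
    one_mul] at step
  exact step

noncomputable def c0 : ℝ := 2 / (3 * Real.exp 1 * (Real.exp 1 + 1))

lemma c0_pos : 0 < c0 := by
  rw [c0]; positivity

noncomputable def KK : ℝ := max 6 (Real.sqrt π * Real.exp (2/3) / c0 ^ ((5:ℝ)/3))

lemma KK_ge_six : (6:ℝ) ≤ KK := le_max_left _ _

lemma gg_one_lb {t : ℝ} (ht : t ≤ 2) :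
    Real.exp t / (Real.exp 1 * (Real.exp 1 + 1)) ≤ gg t 1 := by
  have hu : (1:ℝ) ≤ Real.exp 1 * Real.exp (1 - t) := by
    rw [← Real.exp_add]
    exact Real.one_le_exp (by linarith)
  have h1 : 1 + Real.exp (1 - t) ≤ (Real.exp 1 + 1) * Real.exp (1 - t) := by
    nlinarith [Real.exp_pos (1 - t)]
  have h2 : ((Real.exp 1 + 1) * Real.exp (1 - t))⁻¹ ≤ gg t 1 := by
    rw [gg]
    exact inv_anti₀ (one_add_exp_pos t 1) h1
  have h3 : ((Real.exp 1 + 1) * Real.exp (1 - t))⁻¹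
      = Real.exp t / (Real.exp 1 * (Real.exp 1 + 1)) := by
    rw [Real.exp_sub]
    field_simp
  linarith [h2, h3.symm.le]

lemma FF_lb_exp {t : ℝ} (ht : t ≤ 2) : c0 * Real.exp t ≤ FF t := by
  have h1 := FF_ge t
  have h2 := gg_one_lb ht
  have : c0 * Real.exp t = 2/3 * (Real.exp t / (Real.exp 1 * (Real.exp 1 + 1))) := by
    rw [c0]; field_simp
  rw [this]
  nlinarith [h1, h2]

lemma core_ub (t : ℝ) : 2 * FF t - GG t ≤ KK * FF t ^ ((5:ℝ)/3) := by
  rcases le_or_gt t 2 with ht | ht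
  · -- t ≤ 2
    have hD : 2 * FF t - GG t ≤ Real.sqrt π * Real.exp (2*t) := by
      have h1 := twoFF_le t
      have h2 := GG_ge t
      nlinarith [Real.sqrt_nonneg π]
    have hFlb := FF_lb_exp ht
    have huF : Real.exp t ≤ FF t / c0 := (le_div_iff₀ c0_pos).2 (by linarith)
    have h2t : Real.exp (2*t) = Real.exp t ^ ((5:ℝ)/3) * Real.exp t ^ ((1:ℝ)/3) := by
      rw [← Real.rpow_add (Real.exp_pos t), show (5:ℝ)/3 + 1/3 = 2 by norm_num,
        ← Real.exp_mul, mul_comm]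
    have h53 : Real.exp t ^ ((5:ℝ)/3) ≤ (FF t / c0) ^ ((5:ℝ)/3) :=
      Real.rpow_le_rpow (Real.exp_pos t).le huF (by norm_num)
    have h13 : Real.exp t ^ ((1:ℝ)/3) ≤ Real.exp (2/3) := by
      calc Real.exp t ^ ((1:ℝ)/3) ≤ Real.exp 2 ^ ((1:ℝ)/3) :=
            Real.rpow_le_rpow (Real.exp_pos t).le (Real.exp_le_exp.2 ht) (by norm_num)
        _ = Real.exp (2/3) := by rw [← Real.exp_mul]; norm_num
    have hdiv : (FF t / c0) ^ ((5:ℝ)/3) = FF t ^ ((5:ℝ)/3) / c0 ^ ((5:ℝ)/3) :=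
      Real.div_rpow (FF_nonneg t) c0_pos.le _
    have hmain : Real.exp (2*t) ≤ FF t ^ ((5:ℝ)/3) / c0 ^ ((5:ℝ)/3) * Real.exp (2/3) := by
      rw [h2t, ← hdiv]
      exact mul_le_mul h53 h13 (Real.rpow_nonneg (Real.exp_pos t).le _)
        (Real.rpow_nonneg (div_nonneg (FF_nonneg t) c0_pos.le) _)
    have hK : Real.sqrt π * Real.exp (2/3) / c0 ^ ((5:ℝ)/3) ≤ KK := le_max_right _ _
    have hF53 : (0:ℝ) ≤ FF t ^ ((5:ℝ)/3) := Real.rpow_nonneg (FF_nonneg t) _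
    have hc53 : (0:ℝ) < c0 ^ ((5:ℝ)/3) := Real.rpow_pos_of_pos c0_pos _
    calc 2 * FF t - GG t ≤ Real.sqrt π * Real.exp (2*t) := hD
      _ ≤ Real.sqrt π * (FF t ^ ((5:ℝ)/3) / c0 ^ ((5:ℝ)/3) * Real.exp (2/3)) :=
          mul_le_mul_of_nonneg_left hmain (Real.sqrt_nonneg π)
      _ = (Real.sqrt π * Real.exp (2/3) / c0 ^ ((5:ℝ)/3)) * FF t ^ ((5:ℝ)/3) := by ring
      _ ≤ KK * FF t ^ ((5:ℝ)/3) := mul_le_mul_of_nonneg_right hK hF53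
  · -- 2 < t
    have hg1 : (2:ℝ)⁻¹ ≤ gg t 1 := by
      rw [gg]
      refine inv_anti₀ (one_add_exp_pos t 1) ?_
      have : Real.exp (1 - t) ≤ 1 := Real.exp_le_one_iff.2 (by linarith)
      linarith
    have hF : (1:ℝ)/3 ≤ FF t := by
      have := FF_ge t
      nlinarith
    have hF0 : (0:ℝ) < FF t := by linarith
    have hpow : FF t ^ ((5:ℝ)/3) = FF t * FF t ^ ((2:ℝ)/3) := by
      rw [show (5:ℝ)/3 = 1 + 2/3 by norm_num, Real.rpow_add hF0, Real.rpow_one]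
    have h23 : (1:ℝ)/3 ≤ FF t ^ ((2:ℝ)/3) := by
      have ha : ((1:ℝ)/3) ^ (1:ℝ) ≤ ((1:ℝ)/3) ^ ((2:ℝ)/3) :=
        Real.rpow_le_rpow_of_exponent_ge (by norm_num) (by norm_num) (by norm_num)
      have hb : ((1:ℝ)/3) ^ ((2:ℝ)/3) ≤ FF t ^ ((2:ℝ)/3) :=
        Real.rpow_le_rpow (by norm_num) hF (by norm_num)
      rw [Real.rpow_one] at ha
      linarith
    have hGG := GG_nonneg t
    have hKK := KK_ge_six
    have hF53 : (0:ℝ) ≤ FF t ^ ((5:ℝ)/3) := Real.rpow_nonneg (FF_nonneg t) _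
    rw [hpow] at hF53 ⊢
    nlinarith [mul_le_mul_of_nonneg_left h23 hF0.le]

lemma fermi_half_eq (t : ℝ) : fermi (1/2) t = FF t := by
  rw [fermi, FF]
  exact setIntegral_congr_fun measurableSet_Ioi (fun x _ => by rw [gg, div_eq_mul_inv])

lemma fermi_neg_half_eq (t : ℝ) : fermi (-(1/2)) t = GG t := by
  rw [fermi, GG]
  exact setIntegral_congr_fun measurableSet_Ioi (fun x _ => by rw [gg, div_eq_mul_inv])


end FDaux

open MeasureTheory Topology in
/-- there is a constant `C > 0`, independent of the parameters,
such that for all `η, μ > 0` with `μ² η³ = 8/3`, the Fermi–Dirac nonlinearity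
`R(z) = (μ/4) f_{−1/2}(f_{1/2}^{−1}(2z/μ))` satisfies
`0 ≤ z − R(z) ≤ C η z^{5/3}` for all `z > 0` (stated via any `t` with
`f_{1/2}(t) = 2z/μ`). -/
theorem fd_R_estimate :
    ∃ C : ℝ, 0 < C ∧
      ∀ η μ : ℝ, 0 < η → 0 < μ → μ ^ 2 * η ^ 3 = 8 / 3 →
        ∀ z : ℝ, 0 < z → ∀ t : ℝ, fermi (1 / 2) t = 2 * z / μ →
          0 ≤ z - μ / 4 * fermi (-(1 / 2)) t ∧
          z - μ / 4 * fermi (-(1 / 2)) t ≤ C * η * z ^ ((5 : ℝ) / 3) := by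
  refine ⟨3 * KK / 4, by nlinarith [KK_ge_six], ?_⟩
  intro η μ hη hμ hrel z hz t hFt
  rw [fermi_neg_half_eq]
  rw [fermi_half_eq] at hFt
  have hμF : μ * FF t = 2 * z := by
    rw [hFt]; field_simp
  have hz' : z = μ * FF t / 2 := by linarith
  have hDlb : 0 ≤ 2 * FF t - GG t := by linarith [GG_le_twoFF t]
  have hA : z - μ / 4 * GG t = μ / 4 * (2 * FF t - GG t) := by
    rw [hz']; ring
  constructor
  · rw [hA]; positivity
  · -- key2 : μ * FF t ^ (5/3) ≤ 3 * (η * z ^ (5/3))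
    have hF0 : 0 ≤ FF t := FF_nonneg t
    have key2 : μ * FF t ^ ((5:ℝ)/3) ≤ 3 * (η * z ^ ((5:ℝ)/3)) := by
      have hL : (0:ℝ) ≤ μ * FF t ^ ((5:ℝ)/3) :=
        mul_nonneg hμ.le (Real.rpow_nonneg hF0 _)
      have hR : (0:ℝ) ≤ 3 * (η * z ^ ((5:ℝ)/3)) :=
        mul_nonneg (by norm_num) (mul_nonneg hη.le (Real.rpow_nonneg hz.le _))
      refine (pow_le_pow_iff_left₀ hL hR (show 3 ≠ 0 by norm_num)).1 ?_
      have e1 : (FF t ^ ((5:ℝ)/3)) ^ (3:ℕ) = FF t ^ (5:ℕ) := by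
        rw [← Real.rpow_natCast (FF t ^ ((5:ℝ)/3)) 3, ← Real.rpow_mul hF0,
          show (5:ℝ)/3 * ((3:ℕ):ℝ) = ((5:ℕ):ℝ) by norm_num, Real.rpow_natCast]
      have e2 : (z ^ ((5:ℝ)/3)) ^ (3:ℕ) = z ^ (5:ℕ) := by
        rw [← Real.rpow_natCast (z ^ ((5:ℝ)/3)) 3, ← Real.rpow_mul hz.le,
          show (5:ℝ)/3 * ((3:ℕ):ℝ) = ((5:ℕ):ℝ) by norm_num, Real.rpow_natCast]
      rw [mul_pow, mul_pow, mul_pow, e1, e2]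
      have h5 : μ ^ (5:ℕ) * FF t ^ (5:ℕ) = 32 * z ^ (5:ℕ) := by
        have := congrArg (· ^ (5:ℕ)) hμF
        simp only [mul_pow] at this
        norm_num at this
        linarith
      have h6 : μ ^ 2 * (3 ^ (3:ℕ) * (η ^ (3:ℕ) * z ^ (5:ℕ))) = 72 * z ^ (5:ℕ) := by
        linear_combination 27 * z ^ (5:ℕ) * hrel
      -- goal : μ ^ 3 * FF t ^ 5 ≤ 3 ^ 3 * (η ^ 3 * z ^ 5)
      nlinarith [h5, h6, pow_pos hμ 2, pow_nonneg hz.le 5, sq_nonneg μ]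
    have hcore := core_ub t
    calc z - μ / 4 * GG t = μ / 4 * (2 * FF t - GG t) := hA
      _ ≤ μ / 4 * (KK * FF t ^ ((5:ℝ)/3)) :=
          mul_le_mul_of_nonneg_left hcore (by positivity)
      _ = KK / 4 * (μ * FF t ^ ((5:ℝ)/3)) := by ring
      _ ≤ KK / 4 * (3 * (η * z ^ ((5:ℝ)/3))) :=
          mul_le_mul_of_nonneg_left key2 (by nlinarith [KK_ge_six])
      _ = 3 * KK / 4 * η * z ^ ((5:ℝ)/3) := by ring
end

section
/- For every α > −1 and every z ∈ ℝ, the integral f_α(z) = ∫₀^∞ x^α / (1 + exp(x − z)) dx converges and is positive; moreover the function f_α : ℝ → (0,∞) is strictly increasing and is a bijection from ℝ onto (0,∞), i.e. f_α(z) → 0 as z → −∞ and f_α(z) → ∞ as z → +∞. -/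
open Real Filter Set MeasureTheory

lemma fermi_integrand_nonneg {α z x : ℝ} (hx : 0 < x) :
    0 ≤ x ^ α / (1 + Real.exp (x - z)) := by positivity

lemma fermi_integrand_le {α z x : ℝ} (hx : 0 < x) :
    x ^ α / (1 + Real.exp (x - z)) ≤ Real.exp z * (Real.exp (-x) * x ^ α) := by
  have h1 : Real.exp (x - z) ≤ 1 + Real.exp (x - z) := by linarith [Real.exp_pos (x - z)]
  have h2 : x ^ α / (1 + Real.exp (x - z)) ≤ x ^ α / Real.exp (x - z) := by
    rw [div_le_div_iff₀ (by positivity) (Real.exp_pos _)]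
    nlinarith [Real.rpow_nonneg hx.le α, Real.exp_pos (x - z)]
  refine h2.trans_eq ?_
  rw [div_eq_mul_inv, ← Real.exp_neg, neg_sub, Real.exp_sub, Real.exp_neg x]
  ring

lemma fermi_integrand_continuousOn (α z : ℝ) :
    ContinuousOn (fun x => x ^ α / (1 + Real.exp (x - z))) (Set.Ioi 0) := by
  apply ContinuousOn.div
  · exact fun x hx => (Real.continuousAt_rpow_const x α (Or.inl (ne_of_gt hx))).continuousWithinAt
  · fun_prop
  · intro x _; positivity

lemma fermi_gamma_integrable {α : ℝ} (hα : -1 < α) :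
    IntegrableOn (fun x => Real.exp (-x) * x ^ α) (Set.Ioi 0) := by
  have := Real.GammaIntegral_convergent (s := α + 1) (by linarith)
  simpa using this

lemma fermi_integrable {α : ℝ} (hα : -1 < α) (z : ℝ) :
    IntegrableOn (fun x => x ^ α / (1 + Real.exp (x - z))) (Set.Ioi 0) := by
  have hg : IntegrableOn (fun x => Real.exp z * (Real.exp (-x) * x ^ α)) (Set.Ioi 0) :=
    (fermi_gamma_integrable hα).const_mul _
  refine Integrable.mono' hg
    ((fermi_integrand_continuousOn α z).aestronglyMeasurable measurableSet_Ioi) ?_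
  filter_upwards [ae_restrict_mem measurableSet_Ioi] with x hx
  rw [Real.norm_eq_abs, abs_of_nonneg (fermi_integrand_nonneg hx)]
  exact fermi_integrand_le hx

lemma fermi_pos {α : ℝ} (hα : -1 < α) (z : ℝ) : 0 < fermi α z := by
  rw [fermi]
  refine (setIntegral_pos_iff_support_of_nonneg_ae ?_ (fermi_integrable hα z)).2 ?_
  · filter_upwards [ae_restrict_mem measurableSet_Ioi] with x hx
    exact fermi_integrand_nonneg hx
  · have hs : Set.Ioi (0:ℝ) ⊆ Function.support (fun x => x ^ α / (1 + Real.exp (x - z))) ∩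
        Set.Ioi 0 := by
      intro x hx
      refine ⟨?_, hx⟩
      have : 0 < x ^ α / (1 + Real.exp (x - z)) := by
        have := Real.rpow_pos_of_pos hx α
        positivity
      exact this.ne'
    calc (0 : ENNReal) < volume (Set.Ioi (0:ℝ)) := by simp
      _ ≤ _ := measure_mono hs

lemma fermi_strictMono {α : ℝ} (hα : -1 < α) : StrictMono (fermi α) := by
  intro z₁ z₂ hz
  have hlt : ∀ x ∈ Set.Ioi (0:ℝ),
      x ^ α / (1 + Real.exp (x - z₁)) < x ^ α / (1 + Real.exp (x - z₂)) := by
    intro x hx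
    have hnum : 0 < x ^ α := Real.rpow_pos_of_pos hx α
    have hden : 1 + Real.exp (x - z₂) < 1 + Real.exp (x - z₁) := by
      have := Real.exp_lt_exp.2 (by linarith : x - z₂ < x - z₁)
      linarith
    exact div_lt_div_of_pos_left hnum (by positivity) hden
  have hsub : 0 < ∫ x in Set.Ioi (0:ℝ),
      (x ^ α / (1 + Real.exp (x - z₂)) - x ^ α / (1 + Real.exp (x - z₁))) := by
    refine (setIntegral_pos_iff_support_of_nonneg_ae ?_
      ((fermi_integrable hα z₂).sub (fermi_integrable hα z₁))).2 ?_
    · filter_upwards [ae_restrict_mem measurableSet_Ioi] with x hx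
      exact sub_nonneg.2 (hlt x hx).le
    · have hs : Set.Ioi (0:ℝ) ⊆ Function.support (fun x =>
          x ^ α / (1 + Real.exp (x - z₂)) - x ^ α / (1 + Real.exp (x - z₁))) ∩ Set.Ioi 0 :=
        fun x hx => ⟨sub_ne_zero.2 (hlt x hx).ne', hx⟩
      calc (0 : ENNReal) < volume (Set.Ioi (0:ℝ)) := by simp
        _ ≤ _ := measure_mono hs
  have heq := integral_sub (fermi_integrable hα z₂) (fermi_integrable hα z₁)
  rw [heq] at hsub
  show (∫ x in Set.Ioi (0:ℝ), x ^ α / (1 + Real.exp (x - z₁))) <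
    ∫ x in Set.Ioi (0:ℝ), x ^ α / (1 + Real.exp (x - z₂))
  linarith

lemma fermi_continuous {α : ℝ} (hα : -1 < α) : Continuous (fermi α) := by
  rw [continuous_iff_continuousAt]
  intro z₀
  refine MeasureTheory.continuousAt_of_dominated
    (F := fun z x => x ^ α / (1 + Real.exp (x - z)))
    (bound := fun x => Real.exp (z₀ + 1) * (Real.exp (-x) * x ^ α)) ?_ ?_ ?_ ?_
  · filter_upwards with z
    exact (fermi_integrand_continuousOn α z).aestronglyMeasurable measurableSet_Ioi
  · filter_upwards [Ioo_mem_nhds (by linarith : z₀ - 1 < z₀) (by linarith : z₀ < z₀ + 1)]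
      with z hz
    filter_upwards [ae_restrict_mem measurableSet_Ioi] with x hx
    rw [Real.norm_eq_abs, abs_of_nonneg (fermi_integrand_nonneg hx)]
    refine (fermi_integrand_le hx).trans ?_
    have h1 : Real.exp z ≤ Real.exp (z₀ + 1) := Real.exp_le_exp.2 hz.2.le
    have h2 : 0 ≤ Real.exp (-x) * x ^ α :=
      mul_nonneg (Real.exp_nonneg _) (Real.rpow_nonneg (le_of_lt hx) _)
    exact mul_le_mul_of_nonneg_right h1 h2
  · exact (fermi_gamma_integrable hα).const_mul _
  · filter_upwards [ae_restrict_mem measurableSet_Ioi] with x hx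
    apply ContinuousAt.div
    · exact continuousAt_const
    · fun_prop
    · exact ne_of_gt (by positivity)

lemma fermi_tendsto_atBot {α : ℝ} (hα : -1 < α) :
    Filter.Tendsto (fermi α) Filter.atBot (nhds 0) := by
  set C : ℝ := ∫ x in Set.Ioi (0:ℝ), Real.exp (-x) * x ^ α with hC
  have hub : ∀ z : ℝ, fermi α z ≤ Real.exp z * C := by
    intro z
    rw [fermi, hC, ← integral_const_mul]
    refine setIntegral_mono_on (fermi_integrable hα z)
      ((fermi_gamma_integrable hα).const_mul _) measurableSet_Ioi ?_
    exact fun x hx => fermi_integrand_le hx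
  have hlim : Filter.Tendsto (fun z => Real.exp z * C) Filter.atBot (nhds 0) := by
    have := Real.tendsto_exp_atBot.mul_const C
    simpa using this
  refine tendsto_of_tendsto_of_tendsto_of_le_of_le tendsto_const_nhds hlim ?_ ?_
  · exact fun z => (fermi_pos hα z).le
  · exact hub

lemma fermi_tendsto_atTop {α : ℝ} (hα : -1 < α) :
    Filter.Tendsto (fermi α) Filter.atTop Filter.atTop := by
  have hα1 : (0:ℝ) < α + 1 := by linarith
  have key : ∀ z : ℝ, 0 ≤ z → z ^ (α + 1) / (2 * (α + 1)) ≤ fermi α z := by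
    intro z hz
    have hint : IntegrableOn (fun x : ℝ => x ^ α / 2) (Set.Ioc 0 z) :=
      ((intervalIntegral.intervalIntegrable_rpow' hα (a := 0) (b := z)).1).div_const 2
    have h1 : ∫ x in Set.Ioc (0:ℝ) z, x ^ α / 2 ≤
        ∫ x in Set.Ioc (0:ℝ) z, x ^ α / (1 + Real.exp (x - z)) := by
      refine setIntegral_mono_on hint
        ((fermi_integrable hα z).mono_set Set.Ioc_subset_Ioi_self) measurableSet_Ioc ?_
      intro x hx
      have hd : 1 + Real.exp (x - z) ≤ 2 := by
        have : Real.exp (x - z) ≤ 1 := Real.exp_le_one_iff.2 (by linarith [hx.2])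
        linarith
      rw [div_le_div_iff₀ two_pos (by positivity)]
      exact mul_le_mul_of_nonneg_left hd (Real.rpow_nonneg hx.1.le _)
    have h2 : ∫ x in Set.Ioc (0:ℝ) z, x ^ α / (1 + Real.exp (x - z)) ≤ fermi α z := by
      rw [fermi]
      refine setIntegral_mono_set (fermi_integrable hα z) ?_ ?_
      · filter_upwards [ae_restrict_mem measurableSet_Ioi] with x hx
        exact fermi_integrand_nonneg hx
      · exact HasSubset.Subset.eventuallyLE Set.Ioc_subset_Ioi_self
    have h3 : ∫ x in Set.Ioc (0:ℝ) z, x ^ α / 2 = z ^ (α + 1) / (2 * (α + 1)) := by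
      have : ∫ x in Set.Ioc (0:ℝ) z, x ^ α / 2 =
          (∫ x in Set.Ioc (0:ℝ) z, x ^ α) / 2 := by
        simp [div_eq_mul_inv, integral_mul_const]
      rw [this, ← intervalIntegral.integral_of_le hz, integral_rpow (Or.inl hα)]
      rw [Real.zero_rpow hα1.ne', sub_zero, div_div, mul_comm]
    linarith
  have hlow : Filter.Tendsto (fun z : ℝ => z ^ (α + 1) / (2 * (α + 1)))
      Filter.atTop Filter.atTop :=
    (tendsto_rpow_atTop hα1).atTop_div_const (by positivity)
  refine tendsto_atTop_mono' _ ?_ hlow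
  filter_upwards [eventually_ge_atTop (0:ℝ)] with z hz
  exact key z hz

/-- for `α > −1`, the Fermi integral converges for every `z`, is
positive, and `f_α` is a strictly increasing bijection from `ℝ` onto `(0,∞)`,
with `f_α(z) → 0` as `z → −∞` and `f_α(z) → ∞` as `z → +∞`. -/
theorem fermi_basic_properties (α : ℝ) (hα : -1 < α) :
    (∀ z : ℝ, MeasureTheory.IntegrableOn
      (fun x => x ^ α / (1 + Real.exp (x - z))) (Set.Ioi 0)) ∧
    (∀ z : ℝ, 0 < fermi α z) ∧
    StrictMono (fermi α) ∧
    Set.BijOn (fermi α) Set.univ (Set.Ioi 0) ∧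
    Filter.Tendsto (fermi α) Filter.atBot (nhds 0) ∧
    Filter.Tendsto (fermi α) Filter.atTop Filter.atTop := by
  have hbij : Set.BijOn (fermi α) Set.univ (Set.Ioi 0) := by
    refine ⟨fun z _ => fermi_pos hα z, (fermi_strictMono hα).injective.injOn, ?_⟩
    intro y hy
    obtain ⟨a, ha⟩ : ∃ a, fermi α a < y :=
      ((fermi_tendsto_atBot hα).eventually_lt_const hy).exists
    obtain ⟨b, hb⟩ : ∃ b, y < fermi α b :=
      ((fermi_tendsto_atTop hα).eventually_gt_atTop y).exists
    have hab : a ≤ b := ((fermi_strictMono hα).lt_iff_lt.1 (ha.trans hb)).le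
    have := intermediate_value_Icc hab (fermi_continuous hα).continuousOn
    obtain ⟨x, _, hx⟩ := this ⟨ha.le, hb.le⟩
    exact ⟨x, Set.mem_univ x, hx⟩
  exact ⟨fermi_integrable hα, fermi_pos hα, fermi_strictMono hα, hbij,
    fermi_tendsto_atBot hα, fermi_tendsto_atTop hα⟩
end

section
/- For every α > −1, (α + 1) f_α(z) / z^{α+1} → 1 as z → +∞, where f_α(z) = ∫₀^∞ x^α / (1 + exp(x − z)) dx; i.e. f_α(z) is asymptotically equivalent to z^{α+1}/(α+1) as z → +∞. -/
open Real Filter Set MeasureTheory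

lemma fermi_scaled (α : ℝ) {z : ℝ} (hz : 0 < z) :
    fermi α z = z ^ (α + 1) *
      ∫ t in Set.Ioi (0 : ℝ), t ^ α / (1 + Real.exp (z * (t - 1))) := by
  have h := MeasureTheory.integral_comp_mul_left_Ioi
    (fun x => x ^ α / (1 + Real.exp (x - z))) 0 hz
  beta_reduce at h
  rw [mul_zero] at h
  have h2 : (∫ t in Set.Ioi (0 : ℝ), (z * t) ^ α / (1 + Real.exp (z * t - z)))
      = ∫ t in Set.Ioi (0 : ℝ), z ^ α * (t ^ α / (1 + Real.exp (z * (t - 1)))) := by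
    apply MeasureTheory.setIntegral_congr_fun measurableSet_Ioi
    intro t ht
    beta_reduce
    have : (z * t) ^ α = z ^ α * t ^ α :=
      Real.mul_rpow hz.le (le_of_lt ht)
    rw [this, mul_div_assoc, mul_sub, mul_one]
  rw [h2, MeasureTheory.integral_const_mul, smul_eq_mul] at h
  unfold fermi
  rw [Real.rpow_add hz, Real.rpow_one]
  calc (∫ x in Set.Ioi (0:ℝ), x ^ α / (1 + Real.exp (x - z)))
      = z * (z⁻¹ * ∫ x in Set.Ioi (0:ℝ), x ^ α / (1 + Real.exp (x - z))) := by
        field_simp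
    _ = z * (z ^ α * ∫ t in Set.Ioi (0:ℝ), t ^ α / (1 + Real.exp (z * (t - 1)))) := by
        rw [← h]
    _ = z ^ α * z * ∫ t in Set.Ioi (0:ℝ), t ^ α / (1 + Real.exp (z * (t - 1))) := by ring

lemma integral_tendsto (α : ℝ) (hα : -1 < α) :
    Filter.Tendsto
      (fun z : ℝ => ∫ t in Set.Ioi (0 : ℝ), t ^ α / (1 + Real.exp (z * (t - 1))))
      Filter.atTop (nhds ((α + 1)⁻¹)) := by
  have hα1 : 0 < α + 1 := by linarith
  -- limit function
  set L : ℝ → ℝ := Set.indicator (Set.Ioo 0 1) (fun t => t ^ α) with hL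
  have key : Filter.Tendsto
      (fun z : ℝ => ∫ t in Set.Ioi (0 : ℝ), t ^ α / (1 + Real.exp (z * (t - 1))))
      Filter.atTop (nhds (∫ t in Set.Ioi (0 : ℝ), L t)) := by
    apply MeasureTheory.tendsto_integral_filter_of_dominated_convergence
      (fun t => Real.exp 1 * (Real.exp (-t) * t ^ α))
    · -- measurability
      filter_upwards with z
      apply ContinuousOn.aestronglyMeasurable _ measurableSet_Ioi
      apply ContinuousOn.div
      · exact (continuousOn_id.rpow_const fun x hx => Or.inl (ne_of_gt hx))
      · exact (continuous_const.add ((continuous_const.mul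
          (continuous_id.sub continuous_const)).rexp)).continuousOn
      · intro x _
        positivity
    · -- bound
      filter_upwards [Filter.eventually_ge_atTop (1 : ℝ)] with z hz
      filter_upwards [MeasureTheory.ae_restrict_mem measurableSet_Ioi] with t ht
      have ht0 : (0 : ℝ) < t := ht
      have hnum : (0 : ℝ) < 1 + Real.exp (z * (t - 1)) := by positivity
      rw [Real.norm_eq_abs, abs_of_nonneg (by positivity)]
      have hb : 1 / (1 + Real.exp (z * (t - 1))) ≤ Real.exp (1 - t) := by
        rcases le_or_gt t 1 with h1 | h1
        · calc 1 / (1 + Real.exp (z * (t - 1))) ≤ 1 := by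
                rw [div_le_one hnum]; nlinarith [Real.exp_pos (z * (t - 1))]
            _ ≤ Real.exp (1 - t) := Real.one_le_exp (by linarith)
        · have : 1 / (1 + Real.exp (z * (t - 1))) ≤ 1 / Real.exp (z * (t - 1)) := by
            apply one_div_le_one_div_of_le (Real.exp_pos _)
            linarith
          refine this.trans ?_
          rw [one_div, ← Real.exp_neg]
          apply Real.exp_le_exp.2
          nlinarith
      calc t ^ α / (1 + Real.exp (z * (t - 1)))
            = t ^ α * (1 / (1 + Real.exp (z * (t - 1)))) := by ring
        _ ≤ t ^ α * Real.exp (1 - t) := by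
            apply mul_le_mul_of_nonneg_left hb (by positivity)
        _ = Real.exp 1 * (Real.exp (-t) * t ^ α) := by
            rw [show (1 : ℝ) - t = 1 + -t by ring, Real.exp_add]; ring
    · -- integrability of bound
      have hg := Real.GammaIntegral_convergent hα1
      simp only [add_sub_cancel_right] at hg
      exact hg.const_mul _
    · -- pointwise limit a.e.
      have h1 : (volume.restrict (Set.Ioi (0:ℝ))) {(1 : ℝ)} = 0 :=
        le_antisymm (le_trans (MeasureTheory.Measure.restrict_apply_le _ _)
          (by simp)) zero_le
      filter_upwards [MeasureTheory.ae_restrict_mem measurableSet_Ioi,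
        MeasureTheory.measure_eq_zero_iff_ae_notMem.mp h1] with t ht hne
      have ht0 : (0 : ℝ) < t := ht
      have htne : t ≠ 1 := by simpa using hne
      rcases lt_or_gt_of_ne htne with h1t | h1t
      · -- t < 1 : limit is t ^ α
        have hLt : L t = t ^ α := Set.indicator_of_mem (Set.mem_Ioo.mpr ⟨ht0, h1t⟩) _
        rw [hLt]
        have hexp : Filter.Tendsto (fun z : ℝ => Real.exp (z * (t - 1)))
            Filter.atTop (nhds 0) := by
          apply Real.tendsto_exp_atBot.comp
          exact Filter.Tendsto.atTop_mul_const_of_neg (by linarith) Filter.tendsto_id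
        have : Filter.Tendsto (fun z : ℝ => t ^ α / (1 + Real.exp (z * (t - 1))))
            Filter.atTop (nhds (t ^ α / (1 + 0))) :=
          Filter.Tendsto.div tendsto_const_nhds (tendsto_const_nhds.add hexp)
            (by norm_num)
        simpa using this
      · -- t > 1 : limit is 0
        have hLt : L t = 0 := Set.indicator_of_notMem (fun h => absurd h.2 (not_lt.2 h1t.le)) _
        rw [hLt]
        have hexp : Filter.Tendsto (fun z : ℝ => 1 + Real.exp (z * (t - 1)))
            Filter.atTop Filter.atTop := by
          apply Filter.tendsto_atTop_add_const_left
          apply Real.tendsto_exp_atTop.comp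
          exact Filter.Tendsto.atTop_mul_const (by linarith) Filter.tendsto_id
        have := Filter.Tendsto.div_atTop (tendsto_const_nhds :
          Filter.Tendsto (fun _ : ℝ => t ^ α) Filter.atTop (nhds (t ^ α))) hexp
        simpa using this
  have hval : (∫ t in Set.Ioi (0 : ℝ), L t) = (α + 1)⁻¹ := by
    rw [hL, MeasureTheory.setIntegral_indicator measurableSet_Ioo,
      show Set.Ioi (0:ℝ) ∩ Set.Ioo 0 1 = Set.Ioo 0 1 by
        rw [Set.inter_eq_right]; exact Set.Ioo_subset_Ioi_self,
      ← MeasureTheory.integral_Ioc_eq_integral_Ioo,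
      ← intervalIntegral.integral_of_le zero_le_one,
      integral_rpow (Or.inl hα)]
    rw [Real.one_rpow, Real.zero_rpow (by linarith)]
    field_simp
    norm_num
  rwa [hval] at key

/-- for `α > −1`, `f_α(z) ∼ z^{α+1}/(α+1)` as `z → +∞`, i.e.
`(α+1) f_α(z) / z^{α+1} → 1`. -/
theorem fermi_asymptotics_at_top (α : ℝ) (hα : -1 < α) :
    Filter.Tendsto (fun z : ℝ => (α + 1) * fermi α z / z ^ (α + 1))
      Filter.atTop (nhds 1) := by
  have hα1 : (α : ℝ) + 1 ≠ 0 := by linarith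
  have hmain := (integral_tendsto α hα).const_mul (α + 1)
  rw [mul_inv_cancel₀ hα1] at hmain
  apply hmain.congr'
  filter_upwards [Filter.eventually_gt_atTop (0 : ℝ)] with z hz
  rw [fermi_scaled α hz]
  have hzpow : z ^ (α + 1) ≠ 0 := (Real.rpow_pos_of_pos hz _).ne'
  field_simp
end

section
/- For every α > −1, f_α(z) / (Γ(α + 1) e^z) → 1 as z → −∞, where f_α(z) = ∫₀^∞ x^α / (1 + exp(x − z)) dx and Γ is the Euler Gamma function; i.e. f_α(z) is asymptotically equivalent to Γ(α+1) e^z as z → −∞. -/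
open Real Filter Set MeasureTheory

/-- for `α > −1`, `f_α(z) ∼ Γ(α+1) e^z` as `z → −∞`, i.e.
`f_α(z) / (Γ(α+1) e^z) → 1`. -/
theorem fermi_asymptotics_at_bot (α : ℝ) (hα : -1 < α) :
    Filter.Tendsto (fun z : ℝ => fermi α z / (Real.Gamma (α + 1) * Real.exp z))
      Filter.atBot (nhds 1) := by
  have hα1 : (0:ℝ) < α + 1 := by linarith
  have hG : 0 < Real.Gamma (α + 1) := Real.Gamma_pos_of_pos hα1
  have hInt : IntegrableOn (fun x : ℝ => Real.exp (-x) * x ^ α) (Ioi 0) := by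
    have := Real.GammaIntegral_convergent hα1
    simpa using this
  have hGamma : ∫ x in Ioi (0:ℝ), Real.exp (-x) * x ^ α = Real.Gamma (α + 1) := by
    rw [Real.Gamma_eq_integral hα1]; simp
  have hmeas : ∀ z : ℝ, AEStronglyMeasurable (fun x : ℝ => x ^ α / (1 + Real.exp (x - z)))
      (volume.restrict (Ioi 0)) := by
    intro z
    apply ContinuousOn.aestronglyMeasurable ?_ measurableSet_Ioi
    apply ContinuousOn.div
    · exact fun x hx => (Real.continuousAt_rpow_const x α (Or.inl (ne_of_gt hx))).continuousWithinAt
    · exact (by continuity : Continuous fun x : ℝ => 1 + Real.exp (x - z)).continuousOn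
    · intro x _; positivity
  have hub : ∀ z : ℝ, ∀ x ∈ Ioi (0:ℝ),
      x ^ α / (1 + Real.exp (x - z)) ≤ Real.exp z * (Real.exp (-x) * x ^ α) := by
    intro z x hx
    have hx0 : (0:ℝ) < x := hx
    have hxa : 0 ≤ x ^ α := Real.rpow_nonneg hx0.le α
    have hden : 0 < 1 + Real.exp (x - z) := by positivity
    rw [div_le_iff₀ hden]
    have key : Real.exp z * Real.exp (-x) * (1 + Real.exp (x - z))
        = Real.exp (z - x) + 1 := by
      have h1 : Real.exp z * Real.exp (-x) = Real.exp (z - x) := by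
        rw [← Real.exp_add]; ring_nf
      rw [mul_add, mul_one, h1, ← Real.exp_add,
        show z - x + (x - z) = 0 by ring, Real.exp_zero]
    calc x ^ α = x ^ α * 1 := (mul_one _).symm
      _ ≤ x ^ α * (Real.exp (z - x) + 1) := by
          apply mul_le_mul_of_nonneg_left _ hxa
          nlinarith [Real.exp_pos (z - x)]
      _ = Real.exp z * (Real.exp (-x) * x ^ α) * (1 + Real.exp (x - z)) := by
          rw [show Real.exp z * (Real.exp (-x) * x ^ α) * (1 + Real.exp (x - z))
              = x ^ α * (Real.exp z * Real.exp (-x) * (1 + Real.exp (x - z))) by ring, key]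
  have hlb : ∀ z : ℝ, ∀ x ∈ Ioi (0:ℝ),
      Real.exp z / (1 + Real.exp z) * (Real.exp (-x) * x ^ α)
        ≤ x ^ α / (1 + Real.exp (x - z)) := by
    intro z x hx
    have hx0 : (0:ℝ) < x := hx
    have hxa : 0 ≤ x ^ α := Real.rpow_nonneg hx0.le α
    have hden : 0 < 1 + Real.exp (x - z) := by positivity
    have hden2 : 0 < 1 + Real.exp z := by positivity
    rw [div_mul_eq_mul_div, div_le_div_iff₀ hden2 hden]
    have key : Real.exp z * (Real.exp (-x) * x ^ α) * (1 + Real.exp (x - z))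
        = x ^ α * (Real.exp (z - x) + 1) := by
      rw [show Real.exp z * (Real.exp (-x) * x ^ α) * (1 + Real.exp (x - z))
          = x ^ α * (Real.exp z * Real.exp (-x) * (1 + Real.exp (x - z))) by ring,
        mul_add, mul_one, show Real.exp z * Real.exp (-x) = Real.exp (z - x) by
          rw [← Real.exp_add]; ring_nf, ← Real.exp_add,
        show z - x + (x - z) = 0 by ring, Real.exp_zero]
    rw [key]
    have hle : Real.exp (z - x) ≤ Real.exp z := Real.exp_le_exp.2 (by linarith)
    nlinarith [Real.exp_pos z]
  have hIntF : ∀ z : ℝ, IntegrableOn (fun x : ℝ => x ^ α / (1 + Real.exp (x - z))) (Ioi 0) := by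
    intro z
    apply Integrable.mono' (hInt.const_mul (Real.exp z)) (hmeas z)
    filter_upwards [ae_restrict_mem measurableSet_Ioi] with x hx
    have hx0 : (0:ℝ) < x := hx
    rw [Real.norm_eq_abs, abs_of_nonneg (by positivity)]
    exact hub z x hx
  have hUB : ∀ z, fermi α z ≤ Real.exp z * Real.Gamma (α+1) := by
    intro z
    calc fermi α z ≤ ∫ x in Ioi (0:ℝ), Real.exp z * (Real.exp (-x) * x ^ α) :=
          setIntegral_mono_on (hIntF z) (hInt.const_mul _) measurableSet_Ioi (hub z)
      _ = Real.exp z * Real.Gamma (α+1) := by rw [integral_const_mul, hGamma]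
  have hLB : ∀ z, Real.exp z / (1 + Real.exp z) * Real.Gamma (α+1) ≤ fermi α z := by
    intro z
    calc Real.exp z / (1 + Real.exp z) * Real.Gamma (α+1)
        = ∫ x in Ioi (0:ℝ), Real.exp z / (1 + Real.exp z) * (Real.exp (-x) * x ^ α) := by
          rw [integral_const_mul, hGamma]
      _ ≤ fermi α z :=
          setIntegral_mono_on (hInt.const_mul _) (hIntF z) measurableSet_Ioi (hlb z)
  have hq_ub : ∀ z : ℝ, fermi α z / (Real.Gamma (α + 1) * Real.exp z) ≤ 1 := by
    intro z
    rw [div_le_one (by positivity)]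
    calc fermi α z ≤ Real.exp z * Real.Gamma (α+1) := hUB z
      _ = Real.Gamma (α+1) * Real.exp z := mul_comm _ _
  have hq_lb : ∀ z : ℝ, 1 / (1 + Real.exp z) ≤ fermi α z / (Real.Gamma (α + 1) * Real.exp z) := by
    intro z
    rw [le_div_iff₀ (by positivity : (0:ℝ) < Real.Gamma (α+1) * Real.exp z)]
    have : 1 / (1 + Real.exp z) * (Real.Gamma (α + 1) * Real.exp z)
        = Real.exp z / (1 + Real.exp z) * Real.Gamma (α+1) := by
      field_simp
    rw [this]
    exact hLB z
  have hlow : Tendsto (fun z : ℝ => 1 / (1 + Real.exp z)) atBot (nhds 1) := by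
    have h1 : Tendsto (fun z : ℝ => 1 + Real.exp z) atBot (nhds 1) := by
      have := Real.tendsto_exp_atBot
      simpa using tendsto_const_nhds.add this
    simpa [one_div] using h1.inv₀ one_ne_zero
  exact tendsto_of_tendsto_of_tendsto_of_le_of_le hlow tendsto_const_nhds hq_lb hq_ub
end

section
/- Let R : ℝ → ℝ be continuous with 0 ≤ R(z) ≤ z for all z ≥ 0. Suppose x, y : [s₀, s₁] → ℝ are differentiable and satisfy x'(s) = y(s) − x(s) and y'(s) = 2 y(s) − e^{2s} R(e^{−2s} y(s)) x(s) on [s₀, s₁]. If x(s₀) ≥ 0 and y(s₀) > 0, then x(s) ≥ 0 and y(s) > 0 for all s ∈ [s₀, s₁]; that is, the open positive quadrant (together with its x ≥ 0 boundary) is forward invariant under the flow. -/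
open Real Filter Set Topology

private lemma gron_aux (f f' : ℝ → ℝ) (a b C : ℝ)
    (hf : ∀ s ∈ Set.Icc a b, HasDerivWithinAt f (f' s) (Set.Icc a b) s)
    (hbd : ∀ s ∈ Set.Icc a b, -C * f s ≤ f' s) :
    ∀ s ∈ Set.Icc a b, Real.exp (C * a) * f a ≤ Real.exp (C * s) * f s := by
  intro s hsmem
  rcases hsmem with ⟨has, hsb⟩
  have hab : a ≤ b := le_trans has hsb
  have hmono : MonotoneOn (fun t => Real.exp (C * t) * f t) (Set.Icc a b) := by
    apply monotoneOn_of_hasDerivWithinAt_nonneg (convex_Icc a b)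
      (f' := fun t => Real.exp (C * t) * f' t + C * Real.exp (C * t) * f t)
    · exact fun t ht => ((Real.continuous_exp.comp (continuous_const.mul continuous_id)).continuousOn.mul
        (fun u hu => (hf u hu).continuousWithinAt)) t ht
    · intro t ht
      have ht' : t ∈ Set.Icc a b := interior_subset ht
      have h1 : HasDerivWithinAt (fun u => Real.exp (C * u)) (C * Real.exp (C * t)) (interior (Set.Icc a b)) t := by
        have := ((hasDerivAt_id t).const_mul C).exp
        simpa [mul_comm] using this.hasDerivWithinAt
      have h2 := ((hf t ht').mono interior_subset)
      show HasDerivWithinAt (fun t => Real.exp (C * t) * f t) (Real.exp (C * t) * f' t + C * Real.exp (C * t) * f t) (interior (Set.Icc a b)) t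
      exact (h1.mul h2).congr_deriv (by ring)
    · intro t ht
      have ht' : t ∈ Set.Icc a b := interior_subset ht
      have h := hbd t ht'
      have h0 : 0 ≤ C * f t + f' t := by linarith
      nlinarith [Real.exp_pos (C * t), mul_nonneg (Real.exp_nonneg (C * t)) h0]
  exact hmono (Set.mem_Icc.mpr ⟨le_refl a, hab⟩) ⟨has, hsb⟩ has

private lemma gron_nonneg (f f' : ℝ → ℝ) (a b C : ℝ)
    (hf : ∀ s ∈ Set.Icc a b, HasDerivWithinAt f (f' s) (Set.Icc a b) s)
    (hbd : ∀ s ∈ Set.Icc a b, -C * f s ≤ f' s) (ha : 0 ≤ f a) :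
    ∀ s ∈ Set.Icc a b, 0 ≤ f s := by
  intro s hs
  have h := gron_aux f f' a b C hf hbd s hs
  nlinarith [Real.exp_pos (C * a), Real.exp_pos (C * s)]

private lemma gron_pos (f f' : ℝ → ℝ) (a b C : ℝ)
    (hf : ∀ s ∈ Set.Icc a b, HasDerivWithinAt f (f' s) (Set.Icc a b) s)
    (hbd : ∀ s ∈ Set.Icc a b, -C * f s ≤ f' s) (ha : 0 < f a) :
    ∀ s ∈ Set.Icc a b, 0 < f s := by
  intro s hs
  have h := gron_aux f f' a b C hf hbd s hs
  nlinarith [Real.exp_pos (C * a), Real.exp_pos (C * s)]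

/-- forward invariance of the positive quadrant (with its
`x ≥ 0` boundary) for the non-autonomous system `x' = y − x`,
`y' = 2y − e^{2s} R(e^{−2s} y) x` when `0 ≤ R(z) ≤ z` for `z ≥ 0`. -/
theorem positive_quadrant_forward_invariant (R x y : ℝ → ℝ) (s₀ s₁ : ℝ)
    (hs : s₀ ≤ s₁)
    (hRc : Continuous R)
    (hR : ∀ z : ℝ, 0 ≤ z → 0 ≤ R z ∧ R z ≤ z)
    (hx : ∀ s ∈ Set.Icc s₀ s₁, HasDerivWithinAt x (y s - x s) (Set.Icc s₀ s₁) s)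
    (hy : ∀ s ∈ Set.Icc s₀ s₁, HasDerivWithinAt y
      (2 * y s - Real.exp (2 * s) * R (Real.exp (-2 * s) * y s) * x s) (Set.Icc s₀ s₁) s)
    (hx0 : 0 ≤ x s₀) (hy0 : 0 < y s₀) :
    ∀ s ∈ Set.Icc s₀ s₁, 0 ≤ x s ∧ 0 < y s := by
  have hxc : ContinuousOn x (Set.Icc s₀ s₁) := fun t ht => (hx t ht).continuousWithinAt
  have hyc : ContinuousOn y (Set.Icc s₀ s₁) := fun t ht => (hy t ht).continuousWithinAt
  -- bound on x
  obtain ⟨M, hM⟩ : ∃ M : ℝ, ∀ s ∈ Set.Icc s₀ s₁, x s ≤ M := by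
    obtain ⟨M, hM⟩ := (isCompact_Icc.image_of_continuousOn hxc).bddAbove
    exact ⟨M, fun s hs' => hM (Set.mem_image_of_mem x hs')⟩
  -- key: on any initial segment where x,y are nonneg, y is in fact positive
  have ypos : ∀ t ∈ Set.Icc s₀ s₁, (∀ s ∈ Set.Icc s₀ t, 0 ≤ x s ∧ 0 ≤ y s) →
      ∀ s ∈ Set.Icc s₀ t, 0 < y s := by
    intro t ht hnn
    have hsub : Set.Icc s₀ t ⊆ Set.Icc s₀ s₁ := Set.Icc_subset_Icc le_rfl ht.2
    apply gron_pos y (fun s => 2 * y s - Real.exp (2 * s) * R (Real.exp (-2 * s) * y s) * x s)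
      s₀ t M (fun s hs' => (hy s (hsub hs')).mono hsub) _ hy0
    intro s hs'
    obtain ⟨hxnn, hynn⟩ := hnn s hs'
    have hz : 0 ≤ Real.exp (-2 * s) * y s := mul_nonneg (Real.exp_nonneg _) hynn
    obtain ⟨hR0, hR1⟩ := hR _ hz
    have hMx : x s ≤ M := hM s (hsub hs')
    have hle : Real.exp (2 * s) * R (Real.exp (-2 * s) * y s) * x s ≤ y s * x s := by
      have h1 : Real.exp (2 * s) * R (Real.exp (-2 * s) * y s) ≤
          Real.exp (2 * s) * (Real.exp (-2 * s) * y s) :=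
        mul_le_mul_of_nonneg_left hR1 (Real.exp_nonneg _)
      have h2 : Real.exp (2 * s) * (Real.exp (-2 * s) * y s) = y s := by
        rw [← mul_assoc, ← Real.exp_add]; ring_nf; simp
      calc Real.exp (2 * s) * R (Real.exp (-2 * s) * y s) * x s
          ≤ Real.exp (2 * s) * (Real.exp (-2 * s) * y s) * x s :=
            mul_le_mul_of_nonneg_right h1 hxnn
        _ = y s * x s := by rw [h2]
    have hyM : y s * x s ≤ y s * M := mul_le_mul_of_nonneg_left hMx hynn
    nlinarith [hle, hyM, hynn]
  -- x nonneg on a subinterval where y is nonneg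
  have xseg : ∀ c d : ℝ, s₀ ≤ c → d ≤ s₁ → 0 ≤ x c → (∀ s ∈ Set.Icc c d, 0 ≤ y s) →
      ∀ s ∈ Set.Icc c d, 0 ≤ x s := by
    intro c d hc hd hxc0 hyd
    have hsub : Set.Icc c d ⊆ Set.Icc s₀ s₁ := Set.Icc_subset_Icc hc hd
    apply gron_nonneg x (fun s => y s - x s) c d 1
      (fun s hs' => (hx s (hsub hs')).mono hsub) _ hxc0
    intro s hs'
    have := hyd s hs'
    linarith
  set A : Set ℝ := {t ∈ Set.Icc s₀ s₁ | ∀ s ∈ Set.Icc s₀ t, 0 ≤ x s ∧ 0 ≤ y s} with hA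
  have hs₀A : s₀ ∈ A := by
    refine ⟨Set.left_mem_Icc.mpr hs, ?_⟩
    intro s hs'
    have : s = s₀ := le_antisymm hs'.2 hs'.1
    subst this; exact ⟨hx0, hy0.le⟩
  have hbdd : BddAbove A := ⟨s₁, fun t ht => ht.1.2⟩
  have hne : A.Nonempty := ⟨s₀, hs₀A⟩
  set T := sSup A with hT
  have hs₀T : s₀ ≤ T := le_csSup hbdd hs₀A
  have hTs₁ : T ≤ s₁ := csSup_le hne fun t ht => ht.1.2
  -- T ∈ A
  have hTA : T ∈ A := by
    refine ⟨⟨hs₀T, hTs₁⟩, ?_⟩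
    have hlt : ∀ s ∈ Set.Ico s₀ T, 0 ≤ x s ∧ 0 ≤ y s := by
      intro s hs'
      obtain ⟨t, htA, hst⟩ := exists_lt_of_lt_csSup hne hs'.2
      exact htA.2 s ⟨hs'.1, hst.le⟩
    intro s hs'
    rcases eq_or_lt_of_le hs'.2 with heq | hlt'
    · rw [heq]
      rcases eq_or_lt_of_le hs₀T with heq0 | hlt0
      · rw [← heq0]; exact ⟨hx0, hy0.le⟩
      · haveI hnb : (𝓝[Set.Ico s₀ T] T).NeBot := right_nhdsWithin_Ico_neBot hlt0
        have hsub : Set.Ico s₀ T ⊆ Set.Icc s₀ s₁ := fun u hu => ⟨hu.1, hu.2.le.trans hTs₁⟩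
        have hxT : Filter.Tendsto x (𝓝[Set.Ico s₀ T] T) (𝓝 (x T)) :=
          (hxc T ⟨hs₀T, hTs₁⟩).mono hsub
        have hyT : Filter.Tendsto y (𝓝[Set.Ico s₀ T] T) (𝓝 (y T)) :=
          (hyc T ⟨hs₀T, hTs₁⟩).mono hsub
        constructor
        · exact ge_of_tendsto hxT (eventually_mem_nhdsWithin.mono fun u hu => (hlt u hu).1)
        · exact ge_of_tendsto hyT (eventually_mem_nhdsWithin.mono fun u hu => (hlt u hu).2)
    · exact hlt s ⟨hs'.1, hlt'⟩
  -- T = s₁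
  have hTeq : T = s₁ := by
    by_contra hne'
    have hTlt : T < s₁ := lt_of_le_of_ne hTs₁ hne'
    have hyTpos : 0 < y T := ypos T hTA.1 hTA.2 T ⟨hs₀T, le_rfl⟩
    -- y positive near T within Icc
    have hev : ∀ᶠ u in 𝓝[Set.Icc s₀ s₁] T, 0 < y u :=
      (hyc T hTA.1).eventually (eventually_gt_nhds hyTpos)
    obtain ⟨ε, hε, hball⟩ := Metric.mem_nhdsWithin_iff.mp hev
    set d := min (T + ε / 2) s₁ with hd
    have hTd : T < d := lt_min (by linarith) hTlt
    have hds₁ : d ≤ s₁ := min_le_right _ _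
    have hypos' : ∀ s ∈ Set.Icc T d, 0 < y s := by
      intro u hu
      rcases eq_or_lt_of_le hu.1 with heq | hlt'
      · rw [← heq]; exact hyTpos
      · apply hball
        constructor
        · rw [Metric.mem_ball, Real.dist_eq, abs_of_pos (by linarith)]
          have : u ≤ T + ε / 2 := hu.2.trans (min_le_left _ _)
          linarith
        · exact ⟨hs₀T.trans hu.1, hu.2.trans hds₁⟩
    have hxTnn : 0 ≤ x T := (hTA.2 T ⟨hs₀T, le_rfl⟩).1
    have hxpos' : ∀ s ∈ Set.Icc T d, 0 ≤ x s :=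
      xseg T d hs₀T hds₁ hxTnn fun s hs' => (hypos' s hs').le
    have hdA : d ∈ A := by
      refine ⟨⟨hs₀T.trans hTd.le, hds₁⟩, ?_⟩
      intro s hs'
      rcases le_or_gt s T with hle | hgt
      · exact hTA.2 s ⟨hs'.1, hle⟩
      · exact ⟨hxpos' s ⟨hgt.le, hs'.2⟩, (hypos' s ⟨hgt.le, hs'.2⟩).le⟩
    have : d ≤ T := le_csSup hbdd hdA
    linarith
  -- conclude
  have hall : ∀ s ∈ Set.Icc s₀ s₁, 0 ≤ x s ∧ 0 ≤ y s := by rw [← hTeq]; exact hTA.2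
  intro s hs'
  exact ⟨(hall s hs').1, ypos s₁ (Set.right_mem_Icc.mpr hs) hall s hs'⟩
end
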